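/- arXiv:1306.4827 — 8 statements merged into one kernel-verified Lean document; each statement's English description precedes it below -/
import Mathlib

section
/- Let S be a transformation semigroup on a finite set Ω, and let Gr(S) be the graph on vertex set Ω where v and w are adjacent iff no element of S maps v and w to the same point. Then S contains a constant map (a map of rank 1) if and only if Gr(S) is the null graph (has no edges). -/
open Finset

variable {Ω : Type*} [Fintype Ω] [DecidableEq Ω]

/-- The graph associated to a set of transformations: `v ~ w` iff no `f ∈ S` collapses them. -/
def Gr (S : Set (Ω → Ω)) : SimpleGraph Ω where
  Adj v w := v ≠ w ∧ ∀ f ∈ S, f v ≠ f w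
  symm := by constructor; rintro v w ⟨h1, h2⟩; exact ⟨h1.symm, fun f hf => (h2 f hf).symm⟩
  loopless := by constructor; rintro v ⟨h, _⟩; exact h rfl

/-- The rank of a transformation of a finite set: the size of its image. -/
def rank (f : Ω → Ω) : ℕ := (Finset.univ.image f).card

/-- A permutation group is primitive if it is transitive and all blocks are trivial. -/
def IsPrimitive (G : Subgroup (Equiv.Perm Ω)) : Prop :=
  MulAction.IsPretransitive G Ω ∧
    ∀ B : Set Ω, MulAction.IsBlock G B → B.Subsingleton ∨ B = Set.univ

/-- The semigroup generated by a permutation group `G` and a transformation `f`. -/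
def genSemigroup (G : Subgroup (Equiv.Perm Ω)) (f : Ω → Ω) : Subsemigroup (Function.End Ω) :=
  Subsemigroup.closure ((fun g : Equiv.Perm Ω => (g : Ω → Ω)) '' (G : Set (Equiv.Perm Ω)) ∪ {f})

/-- `G` synchronizes `f` if `⟨G, f⟩` contains a constant map. -/
def Synchronizes (G : Subgroup (Equiv.Perm Ω)) (f : Ω → Ω) : Prop :=
  ∃ h ∈ genSemigroup G f, ∃ c : Ω, ∀ x : Ω, h x = c

/-- `f` has kernel type `(k,1,…,1)`: one kernel class of size `k`, all others singletons. -/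
def KernelTypeK (f : Ω → Ω) (k : ℕ) : Prop :=
  ∃ A : Finset Ω, A.card = k ∧ (∀ x ∈ A, ∀ y ∈ A, f x = f y) ∧
    ∀ x y : Ω, f x = f y → x = y ∨ (x ∈ A ∧ y ∈ A)

/-- `f` has kernel type `(3,2,1,…,1)`. -/
def KernelType32 (f : Ω → Ω) : Prop :=
  ∃ A B : Finset Ω, A.card = 3 ∧ B.card = 2 ∧
    (∀ x ∈ A, ∀ y ∈ A, f x = f y) ∧ (∀ x ∈ B, ∀ y ∈ B, f x = f y) ∧
    ∀ x y : Ω, f x = f y → x = y ∨ (x ∈ A ∧ y ∈ A) ∨ (x ∈ B ∧ y ∈ B)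

theorem stmt0 [Nonempty Ω] (S : Set (Ω → Ω)) (hne : S.Nonempty)
    (hS : ∀ f ∈ S, ∀ g ∈ S, (g ∘ f) ∈ S) :
    (∃ f ∈ S, ∃ c : Ω, ∀ x : Ω, f x = c) ↔ ∀ v w : Ω, ¬ (Gr S).Adj v w := by
  constructor
  · rintro ⟨f, hf, c, hc⟩ v w ⟨hvw, hadj⟩
    exact hadj f hf (by rw [hc v, hc w])
  · intro hG
    -- choose f in S of minimal rank
    have hranks : {n : ℕ | ∃ f ∈ S, rank f = n}.Nonempty := by
      obtain ⟨f, hf⟩ := hne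
      exact ⟨rank f, f, hf, rfl⟩
    set n := sInf {n : ℕ | ∃ f ∈ S, rank f = n} with hn
    obtain ⟨f, hf, hrf⟩ := Nat.sInf_mem hranks
    have hmin : ∀ g ∈ S, ¬ rank g < n := fun g hg h =>
      Nat.notMem_of_lt_sInf h ⟨g, hg, rfl⟩
    -- rank f = 1, i.e. f is constant
    have hpos : 0 < rank f := Finset.card_pos.mpr ⟨f (Classical.arbitrary Ω), Finset.mem_image_of_mem f (Finset.mem_univ _)⟩
    rcases eq_or_lt_of_le (Nat.succ_le_of_lt hpos : 1 ≤ rank f) with h1 | h2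
    · -- image is a singleton
      obtain ⟨c, hc⟩ := Finset.card_eq_one.mp h1.symm
      refine ⟨f, hf, c, fun x => ?_⟩
      have : f x ∈ Finset.univ.image f := Finset.mem_image_of_mem f (Finset.mem_univ x)
      rw [hc] at this
      exact Finset.mem_singleton.mp this
    · exfalso
      obtain ⟨v, hv, w, hw, hvw⟩ := Finset.one_lt_card.mp h2
      have hex : ∃ g ∈ S, g v = g w := by
        by_contra h
        push_neg at h
        exact hG v w ⟨hvw, fun g hg => h g hg⟩
      obtain ⟨g, hg, hgvw⟩ := hex
      apply hmin _ (hS f hf g hg)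
      rw [hn, ← hrf]
      set A := Finset.univ.image f with hA
      have himg : Finset.univ.image (g ∘ f) = A.image g := by
        ext x; simp [Function.comp, hA]
      have hsub : A.image g ⊆ (A.erase w).image g := by
        intro x hx
        obtain ⟨a, ha, rfl⟩ := Finset.mem_image.mp hx
        rcases eq_or_ne a w with rfl | hne
        · exact Finset.mem_image.mpr ⟨v, Finset.mem_erase.mpr ⟨hvw, hv⟩, hgvw⟩
        · exact Finset.mem_image.mpr ⟨a, Finset.mem_erase.mpr ⟨hne, ha⟩, rfl⟩
      calc rank (g ∘ f) = (A.image g).card := by rw [rank, himg]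
        _ ≤ ((A.erase w).image g).card := Finset.card_le_card hsub
        _ ≤ (A.erase w).card := Finset.card_image_le
        _ < A.card := Finset.card_erase_lt_of_mem hw
        _ = rank f := rfl
end

section
/- Let S be a transformation semigroup on a finite set Ω, and Gr(S) the graph joining v,w iff no element of S collapses them. Then Gr(End(Gr(S))) = Gr(S). -/
open Finset

variable {Ω : Type*} [Fintype Ω] [DecidableEq Ω]

theorem stmt2 (S : Set (Ω → Ω)) (hne : S.Nonempty)
    (hS : ∀ f ∈ S, ∀ g ∈ S, (g ∘ f) ∈ S) :
    Gr {f : Ω → Ω | ∀ v w : Ω, (Gr S).Adj v w → (Gr S).Adj (f v) (f w)} = Gr S := by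
  have memT : ∀ f ∈ S,
      f ∈ {f : Ω → Ω | ∀ v w : Ω, (Gr S).Adj v w → (Gr S).Adj (f v) (f w)} := by
    rintro f hf v w ⟨hvw, h2⟩
    exact ⟨h2 f hf, fun g hg => h2 (g ∘ f) (hS f hf g hg)⟩
  ext v w
  constructor
  · rintro ⟨hvw, h⟩
    exact ⟨hvw, fun f hf => h f (memT f hf)⟩
  · rintro ⟨hvw, h⟩
    exact ⟨hvw, fun f hf => (hf v w ⟨hvw, h⟩).1⟩
end

section
/- Every finite simple graph is isomorphic to an induced subgraph of a graph whose automorphism group is primitive on vertices. -/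
open Finset

variable {Ω : Type*} [Fintype Ω] [DecidableEq Ω]

section Aux
open Pointwise

set_option linter.unreachableTactic false
set_option linter.unnecessarySeqFocus false
set_option linter.unusedTactic false

private lemma pow2_pos' (k : ℕ) : 0 < 2^k := Nat.pow_pos (by norm_num)

private lemma two_pow_add_eq :
    ∀ (a b c d : ℕ), 2^a + 2^b = 2^c + 2^d → (a = c ∧ b = d) ∨ (a = d ∧ b = c) := by
  intro a
  induction a with
  | zero =>
    intro b c d h
    match b, c, d with
    | 0, 0, 0 => exact Or.inl ⟨rfl, rfl⟩
    | 0, 0, d+1 => exfalso; have := pow2_pos' d; rw [pow_succ] at h; simp at h <;> omega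
    | 0, c+1, 0 => exfalso; have := pow2_pos' c; rw [pow_succ] at h; simp at h <;> omega
    | 0, c+1, d+1 =>
      exfalso; have := pow2_pos' c; have := pow2_pos' d
      rw [pow_succ, pow_succ] at h; simp at h <;> omega
    | b+1, 0, 0 =>
      exfalso; have := pow2_pos' b; rw [pow_succ] at h; simp at h <;> omega
    | b+1, 0, d+1 =>
      have he : 2^(b+1) = 2^(d+1) := by omega
      have : b+1 = d+1 := Nat.pow_right_injective (le_refl 2) he
      exact Or.inl ⟨rfl, this⟩
    | b+1, c+1, 0 =>
      have he : 2^(b+1) = 2^(c+1) := by omega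
      have : b+1 = c+1 := Nat.pow_right_injective (le_refl 2) he
      exact Or.inr ⟨rfl, this⟩
    | b+1, c+1, d+1 =>
      exfalso; rw [pow_succ, pow_succ, pow_succ] at h; simp at h <;> omega
  | succ a ih =>
    intro b c d h
    match b, c, d with
    | 0, 0, 0 =>
      exfalso; have := pow2_pos' a; rw [pow_succ] at h; simp at h <;> omega
    | 0, 0, d+1 =>
      have he : 2^(a+1) = 2^(d+1) := by omega
      have : a+1 = d+1 := Nat.pow_right_injective (le_refl 2) he
      exact Or.inr ⟨this, rfl⟩
    | 0, c+1, 0 =>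
      have he : 2^(a+1) = 2^(c+1) := by omega
      have : a+1 = c+1 := Nat.pow_right_injective (le_refl 2) he
      exact Or.inl ⟨this, rfl⟩
    | 0, c+1, d+1 =>
      exfalso; rw [pow_succ, pow_succ, pow_succ] at h; simp at h <;> omega
    | b+1, 0, 0 =>
      exfalso
      have := pow2_pos' a; have := pow2_pos' b
      rw [pow_succ, pow_succ] at h; simp at h <;> omega
    | b+1, 0, d+1 =>
      exfalso; rw [pow_succ, pow_succ, pow_succ] at h; simp at h <;> omega
    | b+1, c+1, 0 =>
      exfalso; rw [pow_succ, pow_succ, pow_succ] at h; simp at h <;> omega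
    | b+1, c+1, d+1 =>
      have h' : 2^a + 2^b = 2^c + 2^d := by
        rw [pow_succ, pow_succ, pow_succ, pow_succ] at h; omega
      rcases ih b c d h' with ⟨h1, h2⟩ | ⟨h1, h2⟩
      · exact Or.inl ⟨by omega, by omega⟩
      · exact Or.inr ⟨by omega, by omega⟩

/-- The automorphism group of a simple graph, as a subgroup of permutations. -/
private def AutG {W : Type*} (X : SimpleGraph W) : Subgroup (Equiv.Perm W) where
  carrier := {g | ∀ v w : W, X.Adj (g v) (g w) ↔ X.Adj v w}
  mul_mem' := by
    intro a b ha hb v w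
    simpa [Equiv.Perm.mul_apply] using (ha (b v) (b w)).trans (hb v w)
  one_mem' := by intro v w; simp
  inv_mem' := by
    intro g hg v w
    simpa using (hg (g⁻¹ v) (g⁻¹ w)).symm

private lemma mem_AutG {W : Type*} (X : SimpleGraph W) (g : Equiv.Perm W) :
    g ∈ AutG X ↔ ∀ v w : W, X.Adj (g v) (g w) ↔ X.Adj v w := Iff.rfl

private lemma addLeft_pow_apply {p : ℕ} (d : ZMod p) : ∀ (m : ℕ) (x : ZMod p),
    ((Equiv.addLeft d)^m) x = m • d + x := by
  intro m
  induction m with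
  | zero => intro x; simp
  | succ m ih =>
    intro x
    rw [pow_succ, Equiv.Perm.mul_apply]
    show (Equiv.addLeft d ^ m) (d + x) = (m + 1) • d + x
    rw [ih, succ_nsmul]
    ring

private lemma primitive_of_circulant (p : ℕ) (hp : p.Prime) (X : SimpleGraph (ZMod p))
    (htrans : ∀ d : ZMod p, Equiv.addLeft d ∈ AutG X) : IsPrimitive (AutG X) := by
  haveI : Fact p.Prime := ⟨hp⟩
  constructor
  · constructor
    intro x y
    refine ⟨⟨Equiv.addLeft (y - x), htrans _⟩, ?_⟩
    show (Equiv.addLeft (y - x)) x = y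
    show y - x + x = y
    ring
  · intro B hB
    by_cases hs : B.Subsingleton
    · exact Or.inl hs
    · right
      rw [Set.not_subsingleton_iff] at hs
      obtain ⟨x, hx, y, hy, hxy⟩ := hs
      set d : ZMod p := y - x with hd
      have hdne : d ≠ 0 := sub_ne_zero.mpr (Ne.symm hxy)
      set g : AutG X := ⟨Equiv.addLeft d, htrans d⟩ with hg
      have hgx : g • x = y := by
        show d + x = y
        rw [hd]; ring
      have hgxB : g • x ∈ B := by rw [hgx]; exact hy
      have hgB : g • B = B := hB.smul_eq_of_mem hx hgxB
      have hpow : ∀ m : ℕ, (g^m) • B = B := by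
        intro m
        induction m with
        | zero => rw [pow_zero, one_smul]
        | succ m ih => rw [pow_succ', mul_smul, ih, hgB]
      ext z
      simp only [Set.mem_univ, iff_true]
      set m : ℕ := ((z - x) * d⁻¹).val with hm
      have hmd : (m : ZMod p) * d = z - x := by
        rw [hm, ZMod.natCast_rightInverse _, mul_assoc,
          ZMod.inv_mul_of_unit d (Ne.isUnit hdne), mul_one]
      have hz : (g^m) • x = z := by
        show ((Equiv.addLeft d)^m) x = z
        rw [addLeft_pow_apply, nsmul_eq_mul, hmd, sub_add_cancel]
      rw [← hpow m, ← hz]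
      exact Set.smul_mem_smul_set hx

private def CircG {V : Type*} (H : SimpleGraph V) (p : ℕ) (e : V → ZMod p) :
    SimpleGraph (ZMod p) where
  Adj x y := x ≠ y ∧ ∃ v w, H.Adj v w ∧ x - y = e v - e w
  symm := by
    constructor
    rintro x y ⟨hne, v, w, ha, he⟩
    refine ⟨hne.symm, w, v, ha.symm, ?_⟩
    have : -(x - y) = -(e v - e w) := by rw [he]
    rw [neg_sub, neg_sub] at this
    exact this
  loopless := by constructor; rintro x ⟨h, -⟩; exact h rfl

end Aux

theorem stmt8 {V : Type*} [Fintype V] (H : SimpleGraph V) :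
    ∃ (W : Type) (_ : Fintype W) (X : SimpleGraph W) (G : Subgroup (Equiv.Perm W)),
      (∀ g : Equiv.Perm W, g ∈ G ↔ ∀ v w : W, X.Adj (g v) (g w) ↔ X.Adj v w) ∧
      IsPrimitive G ∧ ∃ f : V ↪ W, ∀ v w : V, H.Adj v w ↔ X.Adj (f v) (f w) := by
  classical
  set n : ℕ := Fintype.card V with hn
  obtain ⟨p, hple, hp⟩ := Nat.exists_infinite_primes (2^(n+1) + 1)
  haveI : Fact p.Prime := ⟨hp⟩
  set idx : V → ℕ := fun v => ((Fintype.equivFin V) v : ℕ) with hidx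
  have hidxlt : ∀ v, idx v < n := fun v => ((Fintype.equivFin V) v).2
  have hidxinj : Function.Injective idx := fun v w h => by
    apply (Fintype.equivFin V).injective
    exact Fin.ext h
  set e : V → ZMod p := fun v => ((2^(idx v) : ℕ) : ZMod p) with he
  -- key cast fact
  have hlt : ∀ v w : V, 2^(idx v) + 2^(idx w) < p := by
    intro v w
    have h1 : 2^(idx v) < 2^n := Nat.pow_lt_pow_right (by norm_num) (hidxlt v)
    have h2 : 2^(idx w) < 2^n := Nat.pow_lt_pow_right (by norm_num) (hidxlt w)
    have : 2^(n+1) = 2^n + 2^n := by rw [pow_succ]; ring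
    omega
  have hcast : ∀ v w a b : V, e v + e b = e a + e w → v = a ∧ b = w ∨ v = w ∧ b = a := by
    intro v w a b hvw
    have hC : ((2^(idx v) + 2^(idx b) : ℕ) : ZMod p) = ((2^(idx a) + 2^(idx w) : ℕ) : ZMod p) := by
      simp only [he] at hvw
      push_cast at hvw ⊢
      exact hvw
    have hlt1 : 2^(idx v) + 2^(idx b) < p := hlt v b
    have hlt2 : 2^(idx a) + 2^(idx w) < p := hlt a w
    have hNat : 2^(idx v) + 2^(idx b) = 2^(idx a) + 2^(idx w) := by
      have := congrArg ZMod.val hC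
      rwa [ZMod.val_cast_of_lt hlt1, ZMod.val_cast_of_lt hlt2] at this
    rcases two_pow_add_eq _ _ _ _ hNat with ⟨h1, h2⟩ | ⟨h1, h2⟩
    · exact Or.inl ⟨hidxinj h1, hidxinj h2⟩
    · exact Or.inr ⟨hidxinj h1, hidxinj h2⟩
  have heinj : Function.Injective e := by
    intro v w hvw
    have : e v + e w = e w + e w := by rw [hvw]
    rcases hcast v w w w this with ⟨h1, -⟩ | ⟨h1, -⟩ <;> exact h1
  set X : SimpleGraph (ZMod p) := CircG H p e with hX
  refine ⟨ZMod p, inferInstance, X, AutG X, fun g => Iff.rfl, ?_, ?_⟩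
  · apply primitive_of_circulant p hp
    intro d v w
    constructor
    · rintro ⟨hne, a, b, hab, heq⟩
      refine ⟨fun h => hne (by rw [h]), a, b, hab, ?_⟩
      rw [← heq]
      show v - w = d + v - (d + w)
      ring
    · rintro ⟨hne, a, b, hab, heq⟩
      refine ⟨fun h => hne (by simpa using h), a, b, hab, ?_⟩
      show d + v - (d + w) = e a - e b
      rw [← heq]; ring
  · refine ⟨⟨e, heinj⟩, ?_⟩
    intro v w
    constructor
    · intro hadj
      exact ⟨fun h => hadj.ne (heinj h), v, w, hadj, rfl⟩
    · rintro ⟨hne, a, b, hab, heq⟩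
      have : e v + e b = e a + e w := by
        have := sub_eq_sub_iff_add_eq_add.mp heq
        linear_combination this
      rcases hcast v w a b this with ⟨h1, h2⟩ | ⟨h1, h2⟩
      · rw [h1, ← h2]; exact hab
      · exact absurd (congrArg e h1) hne
end

section
/- Let G be a primitive permutation group on a finite set Ω with |Ω| > 2. Then G synchronizes every idempotent map f with kernel type (3,2,1,…,1). -/
set_option linter.unusedSectionVars false
set_option maxHeartbeats 1000000


open Finset

variable {Ω : Type*} [Fintype Ω] [DecidableEq Ω]

def SAdj (S : Set (Ω → Ω)) (v w : Ω) : Prop := v ≠ w ∧ ∀ h ∈ S, h v ≠ h w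

lemma SAdj.symm' {S : Set (Ω → Ω)} {v w : Ω} (h : SAdj S v w) : SAdj S w v :=
  ⟨h.1.symm, fun f hf => (h.2 f hf).symm⟩

open Classical in
noncomputable def nbr (S : Set (Ω → Ω)) (v : Ω) : Finset Ω :=
  Finset.univ.filter (fun w => SAdj S v w)

lemma mem_nbr {S : Set (Ω → Ω)} {v w : Ω} : w ∈ nbr S v ↔ SAdj S v w := by
  simp [nbr]

section Helpers

variable {S : Set (Ω → Ω)} {G : Subgroup (Equiv.Perm Ω)}

/-- forward invariance of adjacency -/
lemma sadj_apply (hGm : ∀ g : G, ⇑(g : Equiv.Perm Ω) ∈ S)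
    (hcomp : ∀ a ∈ S, ∀ b ∈ S, a ∘ b ∈ S) (g : G) {u v : Ω}
    (h : SAdj S u v) : SAdj S ((g : Equiv.Perm Ω) u) ((g : Equiv.Perm Ω) v) := by
  constructor
  · intro he; exact h.1 ((g : Equiv.Perm Ω).injective he)
  · intro k hk
    have := h.2 (k ∘ ⇑(g : Equiv.Perm Ω)) (hcomp k hk _ (hGm g))
    simpa using this

lemma sadj_iff (hGm : ∀ g : G, ⇑(g : Equiv.Perm Ω) ∈ S)
    (hcomp : ∀ a ∈ S, ∀ b ∈ S, a ∘ b ∈ S) (g : G) {u v : Ω} :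
    SAdj S ((g : Equiv.Perm Ω) u) ((g : Equiv.Perm Ω) v) ↔ SAdj S u v := by
  constructor
  · intro h
    have := sadj_apply hGm hcomp g⁻¹ h
    simpa using this
  · exact sadj_apply hGm hcomp g

lemma nbr_apply (hGm : ∀ g : G, ⇑(g : Equiv.Perm Ω) ∈ S)
    (hcomp : ∀ a ∈ S, ∀ b ∈ S, a ∘ b ∈ S) (g : G) (u : Ω) :
    nbr S ((g : Equiv.Perm Ω) u) = (nbr S u).image ⇑(g : Equiv.Perm Ω) := by
  ext w
  simp only [mem_nbr, Finset.mem_image]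
  constructor
  · intro h
    refine ⟨(g : Equiv.Perm Ω)⁻¹ w, ?_, by simp⟩
    have := sadj_apply hGm hcomp g⁻¹ h
    simpa using this
  · rintro ⟨z, hz, rfl⟩
    exact sadj_apply hGm hcomp g hz

lemma card_nbr_const (hGm : ∀ g : G, ⇑(g : Equiv.Perm Ω) ∈ S)
    (hcomp : ∀ a ∈ S, ∀ b ∈ S, a ∘ b ∈ S)
    (htrans : MulAction.IsPretransitive G Ω) (u v : Ω) :
    (nbr S u).card = (nbr S v).card := by
  obtain ⟨g, hg⟩ := htrans.exists_smul_eq u v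
  have : v = (g : Equiv.Perm Ω) u := hg.symm
  rw [this, nbr_apply hGm hcomp, Finset.card_image_of_injective _ (g : Equiv.Perm Ω).injective]

end Helpers

section Blocks

variable {G : Subgroup (Equiv.Perm Ω)}

/-- classes of a `G`-invariant equivalence relation with a nontrivial class are universal,
when `G` is primitive. -/
lemma rel_univ (hprim : IsPrimitive G) (E : Ω → Ω → Prop) (hEq : Equivalence E)
    (hinv : ∀ (g : G) (u v : Ω), E u v → E ((g : Equiv.Perm Ω) u) ((g : Equiv.Perm Ω) v))
    {u v : Ω} (huv : E u v) (hne : u ≠ v) : ∀ a b : Ω, E a b := by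
  set Bl : Set Ω := {w | E u w} with hBl
  have hinv' : ∀ (g : G) (a b : Ω), E ((g : Equiv.Perm Ω) a) ((g : Equiv.Perm Ω) b) → E a b := by
    intro g a b h
    have := hinv g⁻¹ _ _ h
    simpa using this
  have hsm : ∀ (g : G) (w : Ω), g • w = (g : Equiv.Perm Ω) w := fun _ _ => rfl
  have hblock : MulAction.IsBlock G Bl := by
    rw [MulAction.isBlock_iff_smul_eq_of_nonempty]
    intro g ⟨w, hw1, hw2⟩
    obtain ⟨z, hz, rfl⟩ := hw1
    have hz' : E u z := hz
    have hw2' : E u ((g : Equiv.Perm Ω) z) := hw2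
    ext p
    simp only [Set.mem_smul_set, hsm]
    constructor
    · rintro ⟨r, hr, rfl⟩
      -- E u r; want E u (g r)
      have h1 : E ((g : Equiv.Perm Ω) u) ((g : Equiv.Perm Ω) r) := hinv g _ _ hr
      have h2 : E ((g : Equiv.Perm Ω) u) ((g : Equiv.Perm Ω) z) := hinv g _ _ hz'
      -- E (g z) u from hw2'
      exact hEq.trans (hEq.trans hw2' (hEq.symm h2)) h1
    · intro hp
      refine ⟨(g : Equiv.Perm Ω)⁻¹ p, ?_, by simp⟩
      -- want E u (g⁻¹ p) given E u p
      apply hinv' g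
      simp only [Equiv.Perm.inv_def, Equiv.apply_symm_apply]
      have h2 : E ((g : Equiv.Perm Ω) u) ((g : Equiv.Perm Ω) z) := hinv g _ _ hz'
      exact hEq.trans h2 (hEq.trans (hEq.symm hw2') hp)
  have := hprim.2 Bl hblock
  rcases this with hsub | huniv
  · exact absurd (hsub (show u ∈ Bl from hEq.refl u) (show v ∈ Bl from huv)) hne
  · intro a b
    have ha : E u a := by have : a ∈ Bl := huniv ▸ Set.mem_univ a; exact this
    have hb : E u b := by have : b ∈ Bl := huniv ▸ Set.mem_univ b; exact this
    exact hEq.trans (hEq.symm ha) hb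

end Blocks

section LemL

variable {S : Set (Ω → Ω)} {G : Subgroup (Equiv.Perm Ω)}

lemma sadj_endo (hcomp : ∀ a ∈ S, ∀ b ∈ S, a ∘ b ∈ S)
    {h : Ω → Ω} (hh : h ∈ S) {z w : Ω} (hzw : SAdj S z w) : SAdj S (h z) (h w) := by
  refine ⟨hzw.2 h hh, fun k hk => ?_⟩
  have := hzw.2 (k ∘ h) (hcomp k hk h hh)
  simpa using this

lemma lemL (hprim : IsPrimitive G)
    (hGm : ∀ g : G, ⇑(g : Equiv.Perm Ω) ∈ S)
    (hcomp : ∀ a ∈ S, ∀ b ∈ S, a ∘ b ∈ S)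
    (hedge : ∃ v w, SAdj S v w)
    {h : Ω → Ω} (hh : h ∈ S) {u v : Ω} (hne : u ≠ v) (heq : h u = h v)
    (hinj : Set.InjOn h ↑(nbr S u ∪ nbr S v)) : False := by
  have htrans := hprim.1
  have himg : ∀ p : Ω, (nbr S p).image h ⊆ nbr S (h p) := by
    intro p z' hz'
    obtain ⟨z, hz, rfl⟩ := Finset.mem_image.1 hz'
    exact mem_nbr.2 (sadj_endo hcomp hh (mem_nbr.1 hz))
  have key : ∀ p : Ω, Set.InjOn h ↑(nbr S p) → (nbr S p).image h = nbr S (h p) := by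
    intro p hinjp
    apply Finset.eq_of_subset_of_card_le (himg p)
    rw [Finset.card_image_of_injOn hinjp]
    exact le_of_eq (card_nbr_const hGm hcomp htrans (h p) p)
  have hinju : Set.InjOn h ↑(nbr S u) :=
    hinj.mono (by exact_mod_cast Finset.subset_union_left)
  have hinjv : Set.InjOn h ↑(nbr S v) :=
    hinj.mono (by exact_mod_cast Finset.subset_union_right)
  have hu := key u hinju
  have hv := key v hinjv
  rw [heq] at hu
  -- nbr u = nbr v
  have hnbr_eq : nbr S u = nbr S v := by
    ext z
    constructor
    · intro hz
      have : h z ∈ (nbr S v).image h := by rw [hv, ← hu]; exact Finset.mem_image_of_mem h hz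
      obtain ⟨z', hz', hz'e⟩ := Finset.mem_image.1 this
      have : z' = z := hinj (by simp [hz']) (by simp [hz]) hz'e
      rwa [← this]
    · intro hz
      have : h z ∈ (nbr S u).image h := by rw [hu, ← hv]; exact Finset.mem_image_of_mem h hz
      obtain ⟨z', hz', hz'e⟩ := Finset.mem_image.1 this
      have : z' = z := hinj (by simp [hz']) (by simp [hz]) hz'e
      rwa [← this]
  -- universal same-neighborhood
  have huniv := rel_univ hprim (fun p q => nbr S p = nbr S q)
    ⟨fun _ => rfl, Eq.symm, Eq.trans⟩
    (fun g p q hpq => by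
      show nbr S _ = nbr S _
      rw [nbr_apply hGm hcomp, nbr_apply hGm hcomp, hpq])
    hnbr_eq hne
  obtain ⟨p, q, hpq⟩ := hedge
  have h1 : q ∈ nbr S p := mem_nbr.2 hpq
  rw [huniv p q] at h1
  exact (mem_nbr.1 h1).1 rfl

end LemL


theorem stmt13 (hn : 2 < Fintype.card Ω) (G : Subgroup (Equiv.Perm Ω))
    (hG : IsPrimitive G) (f : Ω → Ω) (hidem : f ∘ f = f) (hker : KernelType32 f) :
    Synchronizes G f := by
  classical
  by_contra hsync
  set S : Set (Ω → Ω) := {h : Ω → Ω | h ∈ genSemigroup G f} with hSdef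
  have hfS : f ∈ S := Subsemigroup.subset_closure (M := Function.End Ω) (Set.mem_union_right _ rfl)
  have hGm : ∀ g : G, ⇑(g : Equiv.Perm Ω) ∈ S := fun g =>
    Subsemigroup.subset_closure (M := Function.End Ω) (Set.mem_union_left _ ⟨(g : Equiv.Perm Ω), g.2, rfl⟩)
  have hcomp : ∀ a ∈ S, ∀ b ∈ S, a ∘ b ∈ S := by
    intro a ha b hb
    exact Subsemigroup.mul_mem (genSemigroup G f) ha hb
  have hnc : ∀ h ∈ S, ¬(∃ c : Ω, ∀ x : Ω, h x = c) := fun h hh hc => hsync ⟨h, hh, hc⟩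
  have hΩ : Nonempty Ω := Fintype.card_pos_iff.1 (by omega)
  -- edge existence
  have hedge : ∃ v w, SAdj S v w := by
    obtain ⟨q, hqS, hqmin⟩ : ∃ q ∈ S, ∀ h ∈ S, rank q ≤ rank h := by
      have hne : {m | ∃ h ∈ S, rank h = m}.Nonempty := ⟨rank f, f, hfS, rfl⟩
      obtain ⟨h, hh, hrh⟩ := Nat.sInf_mem hne
      exact ⟨h, hh, fun k hk => hrh ▸ Nat.sInf_le ⟨k, hk, rfl⟩⟩
    have himne : (Finset.univ.image q).Nonempty := ⟨q (Classical.arbitrary Ω), by simp⟩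
    have h2 : 2 ≤ rank q := by
      rcases Nat.lt_or_ge (rank q) 2 with hlt | hge
      · exfalso
        have h1 : rank q = 1 := by
          have := Finset.card_pos.2 himne
          unfold rank at hlt ⊢
          omega
        obtain ⟨c, hc⟩ := Finset.card_eq_one.1 h1
        refine hnc q hqS ⟨c, fun x => ?_⟩
        have : q x ∈ Finset.univ.image q := by simp
        rw [hc] at this
        simpa using this
      · exact hge
    obtain ⟨v, hv, w, hw, hvw⟩ := Finset.one_lt_card.1 h2
    refine ⟨v, w, hvw, fun h hh heq => ?_⟩
    have hsub : (Finset.univ.image q).image h ⊆ ((Finset.univ.image q).erase v).image h := by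
      intro z hz
      obtain ⟨x, hx, rfl⟩ := Finset.mem_image.1 hz
      rcases eq_or_ne x v with rfl | hxv
      · exact Finset.mem_image.2 ⟨w, Finset.mem_erase.2 ⟨hvw.symm, hw⟩, heq.symm⟩
      · exact Finset.mem_image.2 ⟨x, Finset.mem_erase.2 ⟨hxv, hx⟩, rfl⟩
    have hlt : rank (h ∘ q) < rank q := by
      have e1 : Finset.univ.image (h ∘ q) = (Finset.univ.image q).image h :=
        (Finset.image_image).symm
      calc rank (h ∘ q) = ((Finset.univ.image q).image h).card := by rw [rank, e1]
        _ ≤ (((Finset.univ.image q).erase v).image h).card := Finset.card_le_card hsub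
        _ ≤ ((Finset.univ.image q).erase v).card := Finset.card_image_le
        _ < (Finset.univ.image q).card := Finset.card_erase_lt_of_mem hv
        _ = rank q := rfl
    exact absurd (hqmin _ (hcomp h hh q hqS)) (not_le.2 hlt)
  -- structure of f
  obtain ⟨A, B, hA, hB, hfA, hfB, hcol⟩ := hker
  have hid : ∀ z : Ω, f (f z) = f z := fun z => congrFun hidem z
  have claim1 : ∀ z : Ω, z ∉ A → z ∉ B → f z = z := by
    intro z hzA hzB
    rcases hcol z (f z) (hid z).symm with h | h | h
    · exact h.symm
    · exact absurd h.1 hzA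
    · exact absurd h.1 hzB
  by_cases hAB : ∃ t, t ∈ A ∧ t ∈ B
  · -- degenerate case : B ⊆ A
    obtain ⟨t, htA, htB⟩ := hAB
    have hBA : ∀ b ∈ B, b ∈ A := by
      intro b hb
      obtain ⟨a, haA, haB⟩ : ∃ a ∈ A, a ∉ B := by
        by_contra hcon
        push_neg at hcon
        have := Finset.card_le_card hcon
        omega
      have hfab : f a = f b := (hfA a haA t htA).trans (hfB t htB b hb)
      rcases hcol a b hfab with h | h | h
      · exact h ▸ haA
      · exact h.2
      · exact absurd h.1 haB
    set a' := f t with ha'def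
    have ha'A : a' ∈ A := by
      rcases hcol t a' (hid t).symm with h | h | h
      · exact h ▸ htA
      · exact h.2
      · exact hBA _ h.2
    have hAcard : (A.erase a').card = 2 := by
      rw [Finset.card_erase_of_mem ha'A, hA]
    obtain ⟨x1, x2, hx12, hxset⟩ := Finset.card_eq_two.1 hAcard
    have hx1 : x1 ∈ A.erase a' := by rw [hxset]; simp
    have hx2 : x2 ∈ A.erase a' := by rw [hxset]; simp
    have hfx12 : f x1 = f x2 := hfA x1 (Finset.mem_of_mem_erase hx1) x2 (Finset.mem_of_mem_erase hx2)
    refine lemL hG hGm hcomp hedge hfS hx12 hfx12 ?_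
    intro z hz z' hz' heq
    by_contra hzz
    have hzA : z ∈ A := by
      rcases hcol z z' heq with h | h | h
      · exact absurd h hzz
      · exact h.1
      · exact hBA _ h.1
    have : ∀ u, u ∈ A.erase a' → z ∉ nbr S u := by
      intro u hu hznbr
      exact (mem_nbr.1 hznbr).2 f hfS (hfA u (Finset.mem_of_mem_erase hu) z hzA)
    simp only [Finset.coe_union, Set.mem_union, Finset.mem_coe] at hz
    rcases hz with hz | hz
    · exact this x1 hx1 hz
    · exact this x2 hx2 hz
  · -- main case : A and B disjoint
    have hdisj : ∀ z, z ∈ A → z ∈ B → False := fun z hzA hzB => hAB ⟨z, hzA, hzB⟩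
    obtain ⟨a, haA⟩ := Finset.card_pos.1 (show 0 < A.card by rw [hA]; norm_num)
    obtain ⟨b, hbB⟩ := Finset.card_pos.1 (show 0 < B.card by rw [hB]; norm_num)
    set a' := f a with ha'def
    set b' := f b with hb'def
    have ha'A : a' ∈ A := by
      rcases hcol a a' (hid a).symm with h | h | h
      · exact h ▸ haA
      · exact h.2
      · exact absurd h.1 (fun hh => hdisj a haA hh)
    have hb'B : b' ∈ B := by
      rcases hcol b b' (hid b).symm with h | h | h
      · exact h ▸ hbB
      · exact absurd h.1 (fun hh => hdisj b hh hbB)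
      · exact h.2
    have hfA' : ∀ z ∈ A, f z = a' := fun z hz => hfA z hz a haA
    have hfB' : ∀ z ∈ B, f z = b' := fun z hz => hfB z hz b hbB
    have ha'fix : f a' = a' := hid a
    have hb'fix : f b' = b' := hid b
    have hAcard : (A.erase a').card = 2 := by rw [Finset.card_erase_of_mem ha'A, hA]
    obtain ⟨x1, x2, hx12, hxset⟩ := Finset.card_eq_two.1 hAcard
    have hBcard : (B.erase b').card = 1 := by rw [Finset.card_erase_of_mem hb'B, hB]
    obtain ⟨y, hyset⟩ := Finset.card_eq_one.1 hBcard
    have hx1e : x1 ∈ A.erase a' := by rw [hxset]; simp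
    have hx2e : x2 ∈ A.erase a' := by rw [hxset]; simp
    have hx1A : x1 ∈ A := Finset.mem_of_mem_erase hx1e
    have hx2A : x2 ∈ A := Finset.mem_of_mem_erase hx2e
    have hx1ne : x1 ≠ a' := (Finset.mem_erase.1 hx1e).1
    have hx2ne : x2 ≠ a' := (Finset.mem_erase.1 hx2e).1
    have hye : y ∈ B.erase b' := by rw [hyset]; simp
    have hyB : y ∈ B := Finset.mem_of_mem_erase hye
    have hyne : y ≠ b' := (Finset.mem_erase.1 hye).1
    have hAeq : A = {a', x1, x2} := by rw [← Finset.insert_erase ha'A, hxset]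
    have hBeq : B = {b', y} := by rw [← Finset.insert_erase hb'B, hyset]
    have hfx1 : f x1 = a' := hfA' x1 hx1A
    have hfx2 : f x2 = a' := hfA' x2 hx2A
    have hfy : f y = b' := hfB' y hyB
    have hfz : ∀ z : Ω, z ≠ x1 → z ≠ x2 → z ≠ y → f z = z := by
      intro z h1 h2 h3
      by_cases hzA : z ∈ A
      · have hz : z = a' := by
          rw [hAeq, Finset.mem_insert, Finset.mem_insert, Finset.mem_singleton] at hzA
          tauto
        rw [hz]; exact ha'fix
      by_cases hzB : z ∈ B
      · have hz : z = b' := by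
          rw [hBeq, Finset.mem_insert, Finset.mem_singleton] at hzB
          tauto
        rw [hz]; exact hb'fix
      exact claim1 z hzA hzB
    -- N1 : y is adjacent to at least two elements of A
    have N1 : ∀ u ∈ A, ∀ v ∈ A, u ≠ v → SAdj S u y ∨ SAdj S v y := by
      intro u hu v hv huv
      by_contra hcon
      push_neg at hcon
      refine lemL hG hGm hcomp hedge hfS huv (hfA u hu v hv) ?_
      intro z hz z' hz' heq
      by_contra hzz
      simp only [Finset.coe_union, Set.mem_union, Finset.mem_coe] at hz hz'
      have hmemA : ∀ w, (w ∈ nbr S u ∨ w ∈ nbr S v) → w ∈ A → False := by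
        intro w hw hwA
        rcases hw with hw | hw
        · exact (mem_nbr.1 hw).2 f hfS (hfA u hu w hwA)
        · exact (mem_nbr.1 hw).2 f hfS (hfA v hv w hwA)
      have hyW : (y ∈ nbr S u ∨ y ∈ nbr S v) → False := by
        intro hyW
        rcases hyW with h | h
        · exact hcon.1 (mem_nbr.1 h)
        · exact hcon.2 (mem_nbr.1 h)
      rcases hcol z z' heq with h | h | h
      · exact hzz h
      · exact hmemA z hz h.1
      · have hzB : z = b' ∨ z = y := by
          have := h.1; rw [hBeq, Finset.mem_insert, Finset.mem_singleton] at this; exact this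
        have hz'B : z' = b' ∨ z' = y := by
          have := h.2; rw [hBeq, Finset.mem_insert, Finset.mem_singleton] at this; exact this
        rcases hzB with rfl | rfl
        · rcases hz'B with rfl | rfl
          · exact hzz rfl
          · exact hyW hz'
        · exact hyW hz
    -- maximal fibre
    set FibS : Set ℕ :=
      {k | ∃ h ∈ S, ∃ c : Ω, (Finset.univ.filter (fun z => h z = c)).card = k} with hFibS
    have hFne : FibS.Nonempty := ⟨_, f, hfS, a', rfl⟩
    have hFbdd : BddAbove FibS := ⟨Fintype.card Ω, by
      rintro k ⟨h, hh, c, rfl⟩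
      exact le_trans (Finset.card_filter_le _ _) (le_of_eq Finset.card_univ)⟩
    obtain ⟨q', hq'S, c₁, hP₁card⟩ := Nat.sSup_mem hFne hFbdd
    set m := sSup FibS with hmdef
    set P₁ := Finset.univ.filter (fun z => q' z = c₁) with hP₁def
    have hmax : ∀ h ∈ S, ∀ c : Ω, (Finset.univ.filter (fun z => h z = c)).card ≤ m :=
      fun h hh c => le_csSup hFbdd ⟨h, hh, c, rfl⟩
    have hm1 : 1 ≤ m := by
      have h1 : 1 ≤ (Finset.univ.filter (fun z => f z = a')).card :=
        Finset.card_pos.2 ⟨a', by simp [ha'fix]⟩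
      exact le_trans h1 (hmax f hfS a')
    -- step 9
    have step9 : ∀ g : G, (g : Equiv.Perm Ω) a' ∈ P₁ →
        (g : Equiv.Perm Ω) x1 ∈ P₁ ∧ (g : Equiv.Perm Ω) x2 ∈ P₁ := by
      intro g hga
      set gp : Equiv.Perm Ω := (g : Equiv.Perm Ω) with hgp
      have hga' : q' (gp a') = c₁ := by simpa [hP₁def] using hga
      set U : Finset Ω := Finset.univ.filter (fun z => q' (gp z) = c₁) with hU
      have hq'g : (q' ∘ ⇑gp) ∈ S := hcomp q' hq'S _ (hGm g)
      have hq'gf : ((q' ∘ ⇑gp) ∘ f) ∈ S := hcomp _ hq'g f hfS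
      have haU : a' ∈ U := by simp [hU, hga']
      have hUcard : U.card = m := by
        have himg : U.image ⇑gp = P₁ := by
          ext w
          simp only [Finset.mem_image, hU, hP₁def, Finset.mem_filter, Finset.mem_univ, true_and]
          constructor
          · rintro ⟨z, hz, rfl⟩; exact hz
          · intro hw; exact ⟨gp⁻¹ w, by simpa using hw, by simp⟩
        rw [← hP₁card, ← himg, Finset.card_image_of_injective _ gp.injective]
      set T : Finset Ω := {x1, x2, y} with hT
      set fib2 : Finset Ω := Finset.univ.filter (fun z => q' (gp (f z)) = c₁) with hfib2def
      have hfib2 : fib2.card ≤ m := hmax _ hq'gf c₁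
      have hsub : (U \ T) ∪ {x1, x2} ⊆ fib2 := by
        intro z hz
        rcases Finset.mem_union.1 hz with hz | hz
        · obtain ⟨hzU, hzT⟩ := Finset.mem_sdiff.1 hz
          have hzfix : f z = z := by
            apply hfz <;> (intro h; apply hzT; rw [hT, h]; simp)
          simp only [hfib2def, Finset.mem_filter, Finset.mem_univ, true_and, hzfix]
          simpa [hU] using hzU
        · have hfz' : f z = a' := by
            rcases Finset.mem_insert.1 hz with rfl | hz
            · exact hfx1
            · rw [Finset.mem_singleton.1 hz]; exact hfx2
          simp [hfib2def, hfz', hga']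
      have hdisj2 : Disjoint (U \ T) ({x1, x2} : Finset Ω) := by
        rw [Finset.disjoint_right]
        intro z hz hzU
        have hzT : z ∈ T := by
          rcases Finset.mem_insert.1 hz with rfl | hz
          · simp [hT]
          · rw [Finset.mem_singleton.1 hz]; simp [hT]
        exact (Finset.mem_sdiff.1 hzU).2 hzT
      have hcard12 : ({x1, x2} : Finset Ω).card = 2 := Finset.card_pair hx12
      have hge2 : (U \ T).card + 2 ≤ fib2.card := by
        rw [← hcard12, ← Finset.card_union_of_disjoint hdisj2]
        exact Finset.card_le_card hsub
      have hUsplit : (U \ T).card + (U ∩ T).card = U.card :=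
        Finset.card_sdiff_add_card_inter U T
      have h5 : fib2.card ≤ U.card := hfib2.trans hUcard.ge
      have hUT2 : 2 ≤ (U ∩ T).card := by omega
      have hyU : y ∉ U := by
        intro hyU
        have hyUT : y ∈ U ∩ T := Finset.mem_inter.2 ⟨hyU, by simp [hT]⟩
        obtain ⟨w, hw, hwy⟩ := Finset.exists_mem_ne (s := U ∩ T) (by omega) y
        have hwU := (Finset.mem_inter.1 hw).1
        have hwT := (Finset.mem_inter.1 hw).2
        have hwx : w = x1 ∨ w = x2 := by
          rw [hT] at hwT
          rcases Finset.mem_insert.1 hwT with rfl | hwT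
          · left; rfl
          rcases Finset.mem_insert.1 hwT with rfl | hwT
          · right; rfl
          · exact absurd (Finset.mem_singleton.1 hwT) hwy
        have hwA : w ∈ A := by rcases hwx with rfl | rfl; exacts [hx1A, hx2A]
        have hwa' : a' ≠ w := by rcases hwx with rfl | rfl; exacts [Ne.symm hx1ne, Ne.symm hx2ne]
        have hnad : ∀ u, u ∈ U → ¬ SAdj S u y := by
          intro u hu had
          apply had.2 (q' ∘ ⇑gp) hq'g
          have h1 : q' (gp u) = c₁ := by simpa [hU] using hu
          have h2 : q' (gp y) = c₁ := by simpa [hU] using hyU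
          simpa using h1.trans h2.symm
        rcases N1 a' ha'A w hwA hwa' with h | h
        · exact hnad a' haU h
        · exact hnad w hwU h
      have hUTsub : U ∩ T ⊆ {x1, x2} := by
        intro z hz
        have hzT := (Finset.mem_inter.1 hz).2
        rw [hT] at hzT
        rcases Finset.mem_insert.1 hzT with rfl | hzT
        · simp
        rcases Finset.mem_insert.1 hzT with rfl | hzT
        · simp
        · exact absurd ((Finset.mem_singleton.1 hzT) ▸ (Finset.mem_inter.1 hz).1) hyU
      have hUTeq : U ∩ T = {x1, x2} := Finset.eq_of_subset_of_card_le hUTsub (by omega)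
      constructor
      · have hmem : x1 ∈ U ∩ T := by rw [hUTeq]; simp
        have := (Finset.mem_inter.1 hmem).1
        simp only [hU, Finset.mem_filter, Finset.mem_univ, true_and] at this
        simp [hP₁def, this]
      · have hmem : x2 ∈ U ∩ T := by rw [hUTeq]; simp
        have := (Finset.mem_inter.1 hmem).1
        simp only [hU, Finset.mem_filter, Finset.mem_univ, true_and] at this
        simp [hP₁def, this]
    -- step 10 : the reverse implication by counting
    obtain ⟨h₀, hh₀⟩ := hG.1.exists_smul_eq x1 a'
    have hh₀' : (h₀ : Equiv.Perm Ω) x1 = a' := hh₀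
    set Sa : Set G := {g | (g : Equiv.Perm Ω) a' ∈ P₁} with hSa
    set Sx : Set G := {g | (g : Equiv.Perm Ω) x1 ∈ P₁} with hSx
    have hsubS : Sa ⊆ Sx := fun g hg => (step9 g hg).1
    have himgS : Sx = (fun g => g * h₀) '' Sa := by
      ext k
      constructor
      · intro hk
        refine ⟨k * h₀⁻¹, ?_, inv_mul_cancel_right k h₀⟩
        show ((k * h₀⁻¹ : G) : Equiv.Perm Ω) a' ∈ P₁
        have h1 : ((h₀⁻¹ : G) : Equiv.Perm Ω) a' = x1 := by
          rw [← hh₀']; simp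
        rw [Subgroup.coe_mul, Equiv.Perm.mul_apply, h1]
        exact hk
      · rintro ⟨g, hg, rfl⟩
        show ((g * h₀ : G) : Equiv.Perm Ω) x1 ∈ P₁
        rw [Subgroup.coe_mul, Equiv.Perm.mul_apply, hh₀']
        exact hg
    have hcardS : Sx.ncard = Sa.ncard := by
      rw [himgS, Set.ncard_image_of_injective _ (mul_left_injective h₀)]
    have hSeq : Sa = Sx := Set.eq_of_subset_of_ncard_le hsubS hcardS.le (Set.toFinite _)
    -- step 11 : primitivity
    set E : Ω → Ω → Prop :=
      fun u v => ∀ g : G, ((g : Equiv.Perm Ω) u ∈ P₁ ↔ (g : Equiv.Perm Ω) v ∈ P₁) with hE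
    have hEeq : Equivalence E :=
      ⟨fun _ _ => Iff.rfl, fun h g => (h g).symm, fun h1 h2 g => (h1 g).trans (h2 g)⟩
    have hEinv : ∀ (g : G) (u v : Ω), E u v →
        E ((g : Equiv.Perm Ω) u) ((g : Equiv.Perm Ω) v) := by
      intro g u v h k
      have := h (k * g)
      simpa [Subgroup.coe_mul, Equiv.Perm.mul_apply] using this
    have hEax : E a' x1 := by
      intro g
      constructor
      · intro h; exact (step9 g h).1
      · intro h
        have hgx : g ∈ Sx := h
        rw [← hSeq] at hgx
        exact hgx
    have huniv := rel_univ hG E hEeq hEinv hEax (Ne.symm hx1ne)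
    have hP₁ne : P₁.Nonempty := Finset.card_pos.1 (by omega)
    obtain ⟨p₁, hp₁⟩ := hP₁ne
    obtain ⟨g₀, hg₀⟩ := hG.1.exists_smul_eq a' p₁
    have hg₀' : (g₀ : Equiv.Perm Ω) a' = p₁ := hg₀
    have hall : ∀ w : Ω, w ∈ P₁ := by
      intro w
      have hEv := huniv a' ((g₀ : Equiv.Perm Ω)⁻¹ w) g₀
      have hww : (g₀ : Equiv.Perm Ω) ((g₀ : Equiv.Perm Ω)⁻¹ w) = w := by simp
      rw [hww, hg₀'] at hEv
      exact hEv.1 hp₁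
    refine hnc q' hq'S ⟨c₁, fun x => ?_⟩
    have := hall x
    simp only [hP₁def, Finset.mem_filter, Finset.mem_univ, true_and] at this
    exact this
end

section
/- Let f be a transformation of a finite set Ω and G a group of permutations of Ω. If there exists g ∈ G with rank(f g f) = rank(f), then the semigroup ⟨G,f⟩ contains an idempotent e with the same kernel as f. -/
open Finset

variable {Ω : Type*} [Fintype Ω] [DecidableEq Ω]

-- counting lemma: kernel refinement + equal rank => equal kernel
lemma ker_of_rank_eq (f e : Ω → Ω)
    (h1 : ∀ x y : Ω, f x = f y → e x = e y) (h2 : rank e = rank f) :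
    ∀ x y : Ω, e x = e y → f x = f y := by
  classical
  intro x y hxy
  have : Nonempty Ω := ⟨x⟩
  set φ : Ω → Ω := fun t => e (Function.invFun f t) with hφ
  have key : ∀ z : Ω, φ (f z) = e z := by
    intro z
    have : f (Function.invFun f (f z)) = f z :=
      Function.invFun_eq ⟨z, rfl⟩
    exact h1 _ _ this
  have himg : (Finset.univ.image f).image φ = Finset.univ.image e := by
    ext t
    simp only [Finset.mem_image, Finset.mem_univ, true_and]
    constructor
    · rintro ⟨s, ⟨z, rfl⟩, rfl⟩; exact ⟨z, (key z).symm⟩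
    · rintro ⟨z, rfl⟩; exact ⟨f z, ⟨z, rfl⟩, key z⟩
  have hcard : ((Finset.univ.image f).image φ).card = (Finset.univ.image f).card := by
    rw [himg]; exact h2
  have hinj : Set.InjOn φ (Finset.univ.image f) := Finset.card_image_iff.mp hcard
  have hx : f x ∈ (Finset.univ.image f : Finset Ω) := Finset.mem_image_of_mem f (Finset.mem_univ x)
  have hy : f y ∈ (Finset.univ.image f : Finset Ω) := Finset.mem_image_of_mem f (Finset.mem_univ y)
  apply hinj hx hy
  rw [key, key]; exact hxy

theorem stmt14 (G : Subgroup (Equiv.Perm Ω)) (f : Ω → Ω) (g : Equiv.Perm Ω)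
    (hg : g ∈ G) (hrk : rank (fun x : Ω => f (g (f x))) = rank f) :
    ∃ e ∈ genSemigroup G f, e * e = e ∧ ∀ x y : Ω, e x = e y ↔ f x = f y := by
  classical
  set a : Function.End Ω := ((g : Ω → Ω) ∘ f : Ω → Ω) with ha
  have ha_apply : ∀ x : Ω, a x = g (f x) := fun x => rfl
  have hgmem : ((g : Ω → Ω) : Function.End Ω) ∈ genSemigroup G f :=
    Subsemigroup.subset_closure (Or.inl ⟨g, hg, rfl⟩)
  have hfmem : (f : Function.End Ω) ∈ genSemigroup G f :=
    Subsemigroup.subset_closure (Or.inr rfl)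
  have hamem : a ∈ genSemigroup G f :=
    (genSemigroup G f).mul_mem hgmem hfmem
  have hgi : Function.Injective (g : Ω → Ω) := g.injective
  -- rank a = rank f
  have hrka : rank (a : Ω → Ω) = rank f := by
    have h1 : (Finset.univ.image (a : Ω → Ω)) = (Finset.univ.image f).image (g : Ω → Ω) :=
      (Finset.image_image).symm
    rw [rank, h1, Finset.card_image_of_injective _ hgi]; rfl
  -- rank (a ∘ a) = rank f
  have hrka2 : rank (fun x => a (a x)) = rank f := by
    have h1 : (Finset.univ.image (fun x : Ω => a (a x)))
        = (Finset.univ.image (fun y : Ω => f (g (f y)))).image (g : Ω → Ω) :=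
      (Finset.image_image).symm
    rw [rank, h1, Finset.card_image_of_injective _ hgi]
    exact hrk
  set S : Finset Ω := Finset.univ.image (a : Ω → Ω) with hS
  have hSsub : S.image (a : Ω → Ω) ⊆ S := by
    intro t ht
    rcases Finset.mem_image.mp ht with ⟨s, _, rfl⟩
    exact Finset.mem_image_of_mem _ (Finset.mem_univ s)
  have hScard : (S.image (a : Ω → Ω)).card = S.card := by
    have h1 : S.image (a : Ω → Ω) = Finset.univ.image (fun x => a (a x)) := by
      rw [hS, Finset.image_image]; rfl
    rw [h1]
    show rank (fun x => a (a x)) = rank (a : Ω → Ω)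
    rw [hrka2, hrka]
  have hSeq : S.image (a : Ω → Ω) = S := Finset.eq_of_subset_of_card_le hSsub (le_of_eq hScard.symm)
  have hinjS : Set.InjOn (a : Ω → Ω) S := Finset.card_image_iff.mp hScard
  -- build permutation of S
  have hmap : ∀ x : S, a (x : Ω) ∈ S := by
    intro x
    have h1 : a (x : Ω) ∈ S.image (a : Ω → Ω) := Finset.mem_image_of_mem _ x.2
    rwa [hSeq] at h1
  set π0 : S → S := fun x => ⟨a x, hmap x⟩ with hπ0
  have hπ0inj : Function.Injective π0 := by
    intro x y hxy
    exact Subtype.ext (hinjS x.2 y.2 (congrArg Subtype.val hxy))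
  have hπ0bij : Function.Bijective π0 := Finite.injective_iff_bijective.mp hπ0inj
  set π : Equiv.Perm S := Equiv.ofBijective π0 hπ0bij with hπ
  have hnpos : 0 < orderOf π := orderOf_pos π
  have hπn : π ^ orderOf π = 1 := pow_orderOf_eq_one π
  -- iterate facts
  have hpow_apply : ∀ (m : ℕ) (x : Ω), (a ^ m : Function.End Ω) x = (a : Ω → Ω)^[m] x := by
    intro m
    induction m with
    | zero => intro x; rfl
    | succ k ih =>
      intro x
      have h1 : (a ^ (k + 1) : Function.End Ω) = a ^ k * a := pow_succ a k
      rw [h1]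
      show (a ^ k : Function.End Ω) (a x) = (a : Ω → Ω)^[k+1] x
      rw [ih (a x), Function.iterate_succ_apply]
  have hπpow : ∀ (m : ℕ) (x : S), ((π ^ m) x : Ω) = (a : Ω → Ω)^[m] x := by
    intro m
    induction m with
    | zero => intro x; rfl
    | succ k ih =>
      intro x
      rw [pow_succ', Equiv.Perm.mul_apply]
      have h1 : ((π ((π ^ k) x)) : Ω) = a (((π ^ k) x : S) : Ω) := rfl
      rw [h1, ih x, ← Function.iterate_succ_apply' (a : Ω → Ω)]
  have hfix : ∀ x ∈ S, (a : Ω → Ω)^[orderOf π] x = x := by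
    intro x hx
    have h1 := hπpow (orderOf π) ⟨x, hx⟩
    rw [hπn] at h1
    simpa using h1.symm
  have hpowmem : ∀ m : ℕ, a ^ (m + 1) ∈ genSemigroup G f := by
    intro m
    induction m with
    | zero => simpa using hamem
    | succ k ih =>
      rw [pow_succ]
      exact (genSemigroup G f).mul_mem ih hamem
  obtain ⟨m, hm⟩ : ∃ m, orderOf π = m + 1 := ⟨orderOf π - 1, (Nat.succ_pred_eq_of_pos hnpos).symm⟩
  refine ⟨a ^ orderOf π, by rw [hm]; exact hpowmem m, ?_, ?_⟩
  · funext x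
    show (a ^ orderOf π : Function.End Ω) ((a ^ orderOf π : Function.End Ω) x)
        = (a ^ orderOf π : Function.End Ω) x
    have hmem : (a ^ orderOf π : Function.End Ω) x ∈ S := by
      rw [hpow_apply, hm, Function.iterate_succ_apply']
      exact Finset.mem_image_of_mem _ (Finset.mem_univ _)
    rw [hpow_apply (orderOf π) ((a ^ orderOf π : Function.End Ω) x)]
    exact hfix _ hmem
  · have hker_fwd : ∀ x y : Ω, f x = f y →
        (a ^ orderOf π : Function.End Ω) x = (a ^ orderOf π : Function.End Ω) y := by
      intro x y hxy
      have h1 : a x = a y := by rw [ha_apply, ha_apply, hxy]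
      rw [hpow_apply, hpow_apply, hm, Function.iterate_succ_apply, Function.iterate_succ_apply]; exact congrArg _ h1
    have hrke : rank ((a ^ orderOf π : Function.End Ω) : Ω → Ω) = rank f := by
      have himg : Finset.univ.image ((a ^ orderOf π : Function.End Ω) : Ω → Ω) = S := by
        apply Finset.Subset.antisymm
        · intro t ht
          rcases Finset.mem_image.mp ht with ⟨x, _, rfl⟩
          rw [hpow_apply, hm, Function.iterate_succ_apply']
          exact Finset.mem_image_of_mem _ (Finset.mem_univ _)
        · intro t ht
          refine Finset.mem_image.mpr ⟨t, Finset.mem_univ t, ?_⟩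
          rw [hpow_apply]; exact hfix t ht
      show (Finset.univ.image ((a ^ orderOf π : Function.End Ω) : Ω → Ω)).card = rank f
      rw [himg, ← hrka]; rfl
    exact fun x y =>
      ⟨fun h => ker_of_rank_eq f _ hker_fwd hrke x y h, hker_fwd x y⟩
end

section
/- Let S be a transformation semigroup on a finite set Ω of size n containing a primitive group G, and suppose the minimum rank of an element of S is r with r > 1. Then S contains no element whose kernel partition has exactly r−1 parts of size n/r together with at least two further parts (i.e., rank > r but with r−1 kernel classes of size n/r). -/
open Finset

variable {Ω : Type*} [Fintype Ω] [DecidableEq Ω]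

lemma neumann_count (G : Subgroup (Equiv.Perm Ω)) (hGt : MulAction.IsPretransitive G Ω)
    (A B : Finset Ω)
    (hAB : ∀ g : Equiv.Perm Ω, g ∈ G → (A.filter (fun a => g a ∈ B)).card = 1) :
    A.card * B.card = Fintype.card Ω := by
  classical
  haveI : Fintype G := Fintype.ofFinite _
  -- the fiber count N a b = #{g ∈ G : g a = b}
  set N : Ω → Ω → ℕ :=
    fun a b => (Finset.univ.filter (fun g : G => (g : Equiv.Perm Ω) a = b)).card with hN
  -- nonempty Ω
  have hA1 : (A.filter (fun a => (1 : Equiv.Perm Ω) a ∈ B)).card = 1 := hAB 1 G.one_mem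
  obtain ⟨a₀, ha₀⟩ := Finset.card_pos.mp (by rw [hA1]; omega)
  have ha₀A : a₀ ∈ A := (Finset.mem_filter.mp ha₀).1
  -- N is constant
  have hNconst : ∀ a b a' b' : Ω, N a b = N a' b' := by
    intro a b a' b'
    obtain ⟨g₁, hg₁⟩ := hGt.exists_smul_eq a' a
    obtain ⟨g₂, hg₂⟩ := hGt.exists_smul_eq b b'
    apply Finset.card_bij' (fun g _ => g₂ * g * g₁) (fun g _ => g₂⁻¹ * g * g₁⁻¹)
    · intro g hg
      simp only [Finset.mem_filter, Finset.mem_univ, true_and] at hg ⊢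
      simp only [Subgroup.coe_mul, Equiv.Perm.coe_mul, Function.comp_apply]
      rw [show ((g₁ : Equiv.Perm Ω) a' : Ω) = a from hg₁, hg, show ((g₂ : Equiv.Perm Ω) b : Ω) = b' from hg₂]
    · intro g hg
      simp only [Finset.mem_filter, Finset.mem_univ, true_and] at hg ⊢
      have h1 : (g₁⁻¹ : G) • a = a' := by rw [← hg₁]; exact inv_smul_smul g₁ a'
      have h2 : (g₂⁻¹ : G) • b' = b := by rw [← hg₂]; exact inv_smul_smul g₂ b
      simp only [Subgroup.coe_mul, Equiv.Perm.coe_mul, Function.comp_apply]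
      rw [show ((g₁⁻¹ : G) : Equiv.Perm Ω) a = a' from h1, hg,
        show ((g₂⁻¹ : G) : Equiv.Perm Ω) b' = b from h2]
    · intro g hg; group
    · intro g hg; group
  -- fiberwise count over an arbitrary target finset
  have key1 : ∀ (a : Ω) (C : Finset Ω),
      (Finset.univ.filter (fun g : G => (g : Equiv.Perm Ω) a ∈ C)).card = C.card * N a₀ a₀ := by
    intro a C
    rw [Finset.card_eq_sum_card_fiberwise
      (f := fun g : G => (g : Equiv.Perm Ω) a) (t := C)
      (s := Finset.univ.filter (fun g : G => (g : Equiv.Perm Ω) a ∈ C))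
      (fun g hg => (Finset.mem_filter.mp hg).2)]
    rw [Finset.sum_congr rfl (fun b hb => ?_), Finset.sum_const, smul_eq_mul]
    rw [Finset.filter_filter]
    rw [show (Finset.univ.filter fun g : G =>
        (g : Equiv.Perm Ω) a ∈ C ∧ (g : Equiv.Perm Ω) a = b)
      = Finset.univ.filter fun g : G => (g : Equiv.Perm Ω) a = b from
      Finset.filter_congr (fun g _ => by
        constructor
        · exact fun h => h.2
        · exact fun h => ⟨h ▸ hb, h⟩)]
    exact hNconst a b a₀ a₀
  -- total count two ways
  have htot : ∑ g : G, (A.filter (fun a => (g : Equiv.Perm Ω) a ∈ B)).card = Fintype.card G := by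
    rw [Finset.sum_congr rfl (fun (g : G) _ => hAB g.1 g.2), Finset.sum_const, smul_eq_mul, mul_one,
      Finset.card_univ]
  have hswap : ∑ g : G, (A.filter (fun a => (g : Equiv.Perm Ω) a ∈ B)).card
      = A.card * (B.card * N a₀ a₀) := by
    simp only [Finset.card_filter]
    rw [Finset.sum_comm]
    rw [Finset.sum_congr rfl (fun a _ => ?_), Finset.sum_const, smul_eq_mul]
    rw [← Finset.card_filter]
    exact key1 a B
  have hcardG : Fintype.card G = Fintype.card Ω * N a₀ a₀ := by
    have := key1 a₀ Finset.univ
    simpa using this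
  have hNpos : 0 < N a₀ a₀ := by
    apply Finset.card_pos.mpr
    exact ⟨1, by simp⟩
  have : A.card * (B.card * N a₀ a₀) = Fintype.card Ω * N a₀ a₀ := by
    rw [← hswap, htot, hcardG]
  rw [← mul_assoc] at this
  exact Nat.eq_of_mul_eq_mul_right hNpos this

lemma uniform_kernel (S : Set (Ω → Ω)) (hS : ∀ f ∈ S, ∀ g ∈ S, (g ∘ f) ∈ S)
    (G : Subgroup (Equiv.Perm Ω)) (hGS : ∀ g : Equiv.Perm Ω, g ∈ G → ⇑g ∈ S)
    (hGt : MulAction.IsPretransitive G Ω) (r : ℕ)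
    (hmin : ∀ f ∈ S, r ≤ rank f)
    (f : Ω → Ω) (hf : f ∈ S) (hfr : rank f = r) (x : Ω) :
    r * (Finset.univ.filter (fun y => f y = f x)).card = Fintype.card Ω := by
  classical
  set A : Finset Ω := Finset.univ.image f with hA
  set B : Finset Ω := Finset.univ.filter (fun y => f y = f x) with hB
  have hAcard : A.card = r := hfr
  have hAB : ∀ g : Equiv.Perm Ω, g ∈ G → (A.filter (fun a => g a ∈ B)).card = 1 := by
    intro g hg
    have hcomp : (f ∘ (⇑g ∘ f)) ∈ S := hS _ (hS f hf ⇑g (hGS g hg)) f hf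
    have himg : Finset.univ.image (f ∘ (⇑g ∘ f)) = A.image (fun a => f (g a)) := by
      ext z
      simp only [Finset.mem_image, Finset.mem_univ, true_and, Function.comp_apply, hA]
      constructor
      · rintro ⟨y, rfl⟩; exact ⟨f y, ⟨y, rfl⟩, rfl⟩
      · rintro ⟨a, ⟨y, rfl⟩, rfl⟩; exact ⟨y, rfl⟩
    have h1 : r ≤ (A.image (fun a => f (g a))).card := by
      have := hmin _ hcomp
      rwa [rank, himg] at this
    have h2 : (A.image (fun a => f (g a))).card ≤ A.card := Finset.card_image_le
    have hcardeq : (A.image (fun a => f (g a))).card = A.card := le_antisymm h2 (hAcard ▸ h1)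
    have hinj : Set.InjOn (fun a => f (g a)) A := Finset.card_image_iff.mp hcardeq
    have hsub : A.image (fun a => f (g a)) ⊆ A := by
      intro z hz
      obtain ⟨a, _, rfl⟩ := Finset.mem_image.mp hz
      exact Finset.mem_image.mpr ⟨g a, Finset.mem_univ _, rfl⟩
    have heq : A.image (fun a => f (g a)) = A :=
      Finset.eq_of_subset_of_card_le hsub (le_of_eq hcardeq.symm)
    have hfx : f x ∈ A := Finset.mem_image.mpr ⟨x, Finset.mem_univ _, rfl⟩
    obtain ⟨a₀, ha₀A, ha₀⟩ := Finset.mem_image.mp (heq ▸ hfx)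
    rw [Finset.card_eq_one]
    refine ⟨a₀, ?_⟩
    ext a
    simp only [Finset.mem_filter, Finset.mem_singleton, hB, Finset.mem_univ, true_and]
    constructor
    · rintro ⟨haA, hga⟩
      exact hinj haA ha₀A (by simpa using hga.trans ha₀.symm)
    · rintro rfl
      exact ⟨ha₀A, by simpa using ha₀⟩
  have := neumann_count G hGt A B hAB
  rwa [hAcard] at this


theorem stmt15 (S : Set (Ω → Ω)) (hS : ∀ f ∈ S, ∀ g ∈ S, (g ∘ f) ∈ S)
    (G : Subgroup (Equiv.Perm Ω)) (hGS : ∀ g : Equiv.Perm Ω, g ∈ G → ⇑g ∈ S)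
    (hG : IsPrimitive G) (r : ℕ) (hr1 : 1 < r)
    (hr : ∃ f ∈ S, rank f = r) (hmin : ∀ f ∈ S, r ≤ rank f) :
    ¬ ∃ h ∈ S, r < rank h ∧
      ((Finset.univ.image h).filter
        (fun v => (Finset.univ.filter (fun x => h x = v)).card = Fintype.card Ω / r)).card
        = r - 1 := by
  classical
  rintro ⟨h, hh, hrh, hcard⟩
  obtain ⟨f, hf, hfr⟩ := hr
  have hGt := hG.1
  have hrpos : 0 < r := by omega
  have uk : ∀ m, m ∈ S → rank m = r → ∀ x : Ω,
      r * (Finset.univ.filter (fun y => m y = m x)).card = Fintype.card Ω :=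
    fun m hm hmr x => uniform_kernel S hS G hGS hGt r hmin m hm hmr x
  have hfcard : (Finset.univ.image f).card = r := hfr
  have hA : (Finset.univ.image f).Nonempty := Finset.card_pos.mp (by omega)
  obtain ⟨z₀, hz₀⟩ := hA
  obtain ⟨x₀, _, hx₀⟩ := Finset.mem_image.mp hz₀
  have hndiv : Fintype.card Ω / r = (Finset.univ.filter (fun y => f y = f x₀)).card := by
    rw [← uk f hf hfr x₀, Nat.mul_div_cancel_left _ hrpos]
  have ukd : ∀ m, m ∈ S → rank m = r → ∀ x : Ω,
      (Finset.univ.filter (fun y => m y = m x)).card = Fintype.card Ω / r := by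
    intro m hm hmr x
    rw [hndiv]
    exact Nat.eq_of_mul_eq_mul_left hrpos ((uk m hm hmr x).trans (uk f hf hfr x₀).symm)
  set D := (Finset.univ.image h).filter
    (fun v => (Finset.univ.filter (fun x => h x = v)).card = Fintype.card Ω / r) with hD
  have hDcard : D.card = r - 1 := hcard
  have hDsub : D ⊆ Finset.univ.image h := Finset.filter_subset _ _
  set T := (Finset.univ.image h) \ D with hT
  have hTsub : T ⊆ Finset.univ.image h := Finset.sdiff_subset
  have hTcard : 2 ≤ T.card := by
    have e1 : T.card = (Finset.univ.image h).card - D.card := Finset.card_sdiff_of_subset hDsub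
    have e2 : D.card ≤ (Finset.univ.image h).card := Finset.card_le_card hDsub
    have e3 : rank h = (Finset.univ.image h).card := rfl
    omega
  obtain ⟨c₁, hc₁, c₂, hc₂, hc12⟩ := Finset.one_lt_card.mp (by omega : 1 < T.card)
  have hc₁D : c₁ ∉ D := (Finset.mem_sdiff.mp hc₁).2
  have hc₂D : c₂ ∉ D := (Finset.mem_sdiff.mp hc₂).2
  -- Key step: every minimal-rank-composition forces the two "small" image points to collapse
  have key : ∀ g : Equiv.Perm Ω, g ∈ G → f (g c₁) = f (g c₂) := by
    intro g hg
    by_contra hne'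
    set K := f ∘ (⇑g ∘ h) with hK
    have hKS : K ∈ S := hS _ (hS h hh ⇑g (hGS g hg)) f hf
    have hKr : rank K = r := by
      refine le_antisymm ?_ (hmin K hKS)
      rw [← hfr]
      apply Finset.card_le_card
      intro z hz
      obtain ⟨y, _, rfl⟩ := Finset.mem_image.mp hz
      exact Finset.mem_image.mpr ⟨g (h y), Finset.mem_univ _, rfl⟩
    have hKfib : ∀ y : Ω,
        (Finset.univ.filter (fun z => K z = K y)).card = Fintype.card Ω / r := ukd K hKS hKr
    have star : ∀ v ∈ D, ∀ w ∈ Finset.univ.image h, f (g w) = f (g v) → w = v := by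
      intro v hvD w hw hfgw
      obtain ⟨y, _, hy⟩ := Finset.mem_image.mp hw
      obtain ⟨yv, _, hyv⟩ := Finset.mem_image.mp (hDsub hvD)
      have hvcard : (Finset.univ.filter (fun x => h x = v)).card = Fintype.card Ω / r :=
        (Finset.mem_filter.mp hvD).2
      have hsub2 : (Finset.univ.filter (fun x => h x = v))
          ⊆ (Finset.univ.filter (fun z => K z = K yv)) := by
        intro z hz
        have hz' : h z = v := (Finset.mem_filter.mp hz).2
        refine Finset.mem_filter.mpr ⟨Finset.mem_univ _, ?_⟩
        show f (g (h z)) = f (g (h yv))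
        rw [hz', hyv]
      have heq2 : (Finset.univ.filter (fun x => h x = v))
          = (Finset.univ.filter (fun z => K z = K yv)) :=
        Finset.eq_of_subset_of_card_le hsub2 (by rw [hvcard, hKfib yv])
      have hyK : y ∈ Finset.univ.filter (fun z => K z = K yv) := by
        refine Finset.mem_filter.mpr ⟨Finset.mem_univ _, ?_⟩
        show f (g (h y)) = f (g (h yv))
        rw [hy, hyv, hfgw]
      rw [← heq2] at hyK
      have : h y = v := (Finset.mem_filter.mp hyK).2
      rw [← hy, this]
    set E := insert c₁ (insert c₂ D) with hE
    have hEcard : E.card = r + 1 := by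
      rw [Finset.card_insert_of_notMem (by simp [hc₁D, hc12]),
        Finset.card_insert_of_notMem hc₂D, hDcard]
      omega
    have hEsub : E ⊆ Finset.univ.image h := by
      intro v hv
      rcases Finset.mem_insert.mp hv with rfl | hv
      · exact hTsub hc₁
      rcases Finset.mem_insert.mp hv with rfl | hv
      · exact hTsub hc₂
      · exact hDsub hv
    have hinjE : Set.InjOn (fun v => f (g v)) E := by
      intro v hv w hw hvw
      simp only [hE, Finset.coe_insert, Set.mem_insert_iff, Finset.mem_coe] at hv hw
      simp only at hvw
      rcases hv with rfl | rfl | hv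
      · rcases hw with rfl | rfl | hw
        · rfl
        · exact absurd hvw hne'
        · exact star w hw v (hTsub hc₁) hvw
      · rcases hw with rfl | rfl | hw
        · exact absurd hvw.symm hne'
        · rfl
        · exact star w hw v (hTsub hc₂) hvw
      · have hwim : w ∈ Finset.univ.image h := by
          rcases hw with rfl | rfl | hw
          · exact hTsub hc₁
          · exact hTsub hc₂
          · exact hDsub hw
        exact (star v hv w hwim hvw.symm).symm
    have himgE : (E.image (fun v => f (g v))).card = r + 1 := by
      rw [Finset.card_image_iff.mpr hinjE, hEcard]
    have hsubK : E.image (fun v => f (g v)) ⊆ Finset.univ.image K := by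
      intro z hz
      obtain ⟨v, hvE, rfl⟩ := Finset.mem_image.mp hz
      obtain ⟨y, _, hy⟩ := Finset.mem_image.mp (hEsub hvE)
      exact Finset.mem_image.mpr ⟨y, Finset.mem_univ _, by show f (g (h y)) = f (g v); rw [hy]⟩
    have hle := Finset.card_le_card hsubK
    rw [himgE] at hle
    have : (Finset.univ.image K).card = r := hKr
    omega
  -- Primitivity: the equivalence closure of the G-orbit of (c₁, c₂) is everything
  set R : Ω → Ω → Prop :=
    fun x y => ∃ g : Equiv.Perm Ω, g ∈ G ∧ g c₁ = x ∧ g c₂ = y with hR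
  have hEf : ∀ x y, Relation.EqvGen R x y → f x = f y := by
    intro x y hxy
    induction hxy with
    | rel x y hxy => obtain ⟨g, hg, rfl, rfl⟩ := hxy; exact key g hg
    | refl x => rfl
    | symm x y _ ih => exact ih.symm
    | trans x y z _ _ ih1 ih2 => exact ih1.trans ih2
  have hEinv : ∀ (σ : Equiv.Perm Ω), σ ∈ G → ∀ x y,
      Relation.EqvGen R x y → Relation.EqvGen R (σ x) (σ y) := by
    intro σ hσ x y hxy
    induction hxy with
    | rel x y hxy =>
        obtain ⟨g, hg, rfl, rfl⟩ := hxy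
        exact Relation.EqvGen.rel _ _ ⟨σ * g, G.mul_mem hσ hg, rfl, rfl⟩
    | refl x => exact Relation.EqvGen.refl _
    | symm x y _ ih => exact Relation.EqvGen.symm _ _ ih
    | trans x y z _ _ ih1 ih2 => exact Relation.EqvGen.trans _ _ _ ih1 ih2
  set Bl : Set Ω := {y | Relation.EqvGen R c₁ y} with hBl
  have hblock : MulAction.IsBlock G Bl := by
    rw [MulAction.isBlock_iff_smul_eq_or_disjoint]
    intro σ
    by_cases hcs : Relation.EqvGen R c₁ ((σ : Equiv.Perm Ω) c₁)
    · left
      ext z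
      simp only [Set.mem_smul_set, hBl, Set.mem_setOf_eq]
      constructor
      · rintro ⟨y, hy, rfl⟩
        exact Relation.EqvGen.trans _ _ _ hcs (hEinv σ.1 σ.2 _ _ hy)
      · intro hz
        refine ⟨(σ⁻¹ : Equiv.Perm Ω) z, ?_, ?_⟩
        · have h1 : Relation.EqvGen R ((σ⁻¹ : Equiv.Perm Ω) c₁) ((σ⁻¹ : Equiv.Perm Ω) z) :=
            hEinv (σ⁻¹ : Equiv.Perm Ω) (by simpa using G.inv_mem σ.2) _ _ hz
          have h2 : Relation.EqvGen R ((σ⁻¹ : Equiv.Perm Ω) c₁)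
              ((σ⁻¹ : Equiv.Perm Ω) ((σ : Equiv.Perm Ω) c₁)) :=
            hEinv (σ⁻¹ : Equiv.Perm Ω) (by simpa using G.inv_mem σ.2) _ _ hcs
          have h3 : ((σ⁻¹ : Equiv.Perm Ω) ((σ : Equiv.Perm Ω) c₁)) = c₁ := by simp
          rw [h3] at h2
          exact Relation.EqvGen.trans _ _ _ (Relation.EqvGen.symm _ _ h2) h1
        · show (σ : Equiv.Perm Ω) ((σ⁻¹ : Equiv.Perm Ω) z) = z
          simp
    · right
      rw [Set.disjoint_left]
      rintro z ⟨y, hy, rfl⟩ hz2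
      refine hcs ?_
      have h1 : Relation.EqvGen R ((σ : Equiv.Perm Ω) c₁) ((σ : Equiv.Perm Ω) y) :=
        hEinv σ.1 σ.2 _ _ hy
      exact Relation.EqvGen.trans _ _ _ hz2 (Relation.EqvGen.symm _ _ h1)
  rcases hG.2 Bl hblock with hsub | huniv
  · refine hc12 (hsub ?_ ?_)
    · exact Relation.EqvGen.refl c₁
    · exact Relation.EqvGen.rel _ _ ⟨1, G.one_mem, rfl, rfl⟩
  · have hconst : ∀ y : Ω, f y = f c₁ :=
      fun y => (hEf c₁ y (Set.eq_univ_iff_forall.mp huniv y)).symm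
    have hrle : rank f ≤ 1 := by
      have hsub1 : Finset.univ.image f ⊆ {f c₁} := by
        intro z hz
        obtain ⟨y, _, rfl⟩ := Finset.mem_image.mp hz
        simp [hconst y]
      exact (Finset.card_le_card hsub1).trans (by simp)
    omega
end

section
/- Let G be a primitive permutation group of degree n > 2. Then G synchronizes every map of rank 2. -/
open Finset

variable {Ω : Type*} [Fintype Ω] [DecidableEq Ω]

set_option maxHeartbeats 1600000 in
theorem stmt17 (hn : 2 < Fintype.card Ω) (G : Subgroup (Equiv.Perm Ω))
    (hG : IsPrimitive G) (f : Ω → Ω) (hf : rank f = 2) : Synchronizes G f := by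
  classical
  obtain ⟨a, b, hab, himg⟩ := Finset.card_eq_two.mp hf
  have hmem : ∀ x : Ω, f x = a ∨ f x = b := by
    intro x
    have : f x ∈ Finset.univ.image f := Finset.mem_image_of_mem f (Finset.mem_univ x)
    rw [himg] at this
    simpa using this
  have ha : ∃ x, f x = a := by
    have : a ∈ Finset.univ.image f := by rw [himg]; simp
    simpa using this
  have hb : ∃ x, f x = b := by
    have : b ∈ Finset.univ.image f := by rw [himg]; simp
    simpa using this
  have hfS : f ∈ ((fun g : Equiv.Perm Ω => (g : Ω → Ω)) '' (G : Set (Equiv.Perm Ω)) ∪ {f}) :=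
    Set.mem_union_right _ rfl
  by_cases hcol : ∃ g ∈ G, f (g a) = f (g b)
  · obtain ⟨g, hgG, hg⟩ := hcol
    have hgS : (g : Ω → Ω) ∈ ((fun g : Equiv.Perm Ω => (g : Ω → Ω)) '' (G : Set (Equiv.Perm Ω)) ∪ {f}) :=
      Set.mem_union_left _ ⟨g, hgG, rfl⟩
    refine ⟨(show Function.End Ω from f) * (show Function.End Ω from ⇑g) *
      (show Function.End Ω from f), ?_, f (g a), ?_⟩
    · exact Subsemigroup.mul_mem _ (Subsemigroup.mul_mem _
        (Subsemigroup.subset_closure hfS) (Subsemigroup.subset_closure hgS))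
        (Subsemigroup.subset_closure hfS)
    · intro x
      show f (g (f x)) = f (g a)
      rcases hmem x with h | h <;> rw [h]
      exact hg.symm
  · push_neg at hcol
    exfalso
    -- the orbital relation on the pair {a, b}
    set r : Ω → Ω → Prop := fun x y =>
      ∃ g : Equiv.Perm Ω, g ∈ G ∧ ((g a = x ∧ g b = y) ∨ (g a = y ∧ g b = x)) with hr
    have rsymm : Symmetric r := by
      rintro x y ⟨g, hgG, h | h⟩
      · exact ⟨g, hgG, Or.inr h⟩
      · exact ⟨g, hgG, Or.inl h⟩
    have flippair : ∀ u v : Ω, f u ≠ f v → (f u = a ↔ ¬ f v = a) := by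
      intro u v hne
      rcases hmem u with hu | hu <;> rcases hmem v with hv | hv
      · exact absurd (hu.trans hv.symm) hne
      · rw [hu, hv]; simp [hab.symm]
      · rw [hu, hv]; simp [hab.symm]
      · exact absurd (hu.trans hv.symm) hne
    have rflip : ∀ x y, r x y → (f x = a ↔ ¬ f y = a) := by
      rintro x y ⟨g, hgG, ⟨hx, hy⟩ | ⟨hx, hy⟩⟩
      · subst hx; subst hy; exact flippair _ _ (hcol g hgG)
      · subst hx; subst hy; exact flippair _ _ (Ne.symm (hcol g hgG))
    have rinv : ∀ h : Equiv.Perm Ω, h ∈ G → ∀ x y, r x y → r (h x) (h y) := by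
      rintro h hhG x y ⟨g, hgG, hc | hc⟩
      · exact ⟨h * g, mul_mem hhG hgG, Or.inl ⟨by simp [hc.1], by simp [hc.2]⟩⟩
      · exact ⟨h * g, mul_mem hhG hgG, Or.inr ⟨by simp [hc.1], by simp [hc.2]⟩⟩
    have rab : r a b := ⟨1, one_mem G, Or.inl ⟨rfl, rfl⟩⟩
    have hsymmR : Symmetric (Relation.ReflTransGen r) := by
      haveI : Std.Symm r := ⟨rsymm⟩
      exact fun x y h => Std.Symm.symm x y h
    have reach_map : ∀ g : Equiv.Perm Ω, g ∈ G → ∀ x y,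
        Relation.ReflTransGen r x y → Relation.ReflTransGen r (g x) (g y) := by
      intro g hgG x y h
      induction h with
      | refl => exact Relation.ReflTransGen.refl
      | tail _ hstep ih => exact ih.tail (rinv g hgG _ _ hstep)
    -- connectivity: the reachable set from a is a block, hence all of Ω
    set C : Set Ω := {x | Relation.ReflTransGen r a x} with hC
    have hCblock : MulAction.IsBlock G C := by
      rw [MulAction.isBlock_iff_smul_eq_of_nonempty]
      rintro ⟨g, hgG⟩ ⟨z, hz1, hz2⟩
      obtain ⟨w, hw, hgw⟩ := hz1
      have hgw' : (g : Equiv.Perm Ω) w = z := hgw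
      have hw' : Relation.ReflTransGen r a w := hw
      have hz2' : Relation.ReflTransGen r a z := hz2
      have hreach_ga : Relation.ReflTransGen r a (g a) :=
        hz2'.trans (hsymmR (hgw' ▸ reach_map g hgG a w hw'))
      ext x
      constructor
      · rintro ⟨u, hu, rfl⟩
        show Relation.ReflTransGen r a ((g : Equiv.Perm Ω) u)
        exact hreach_ga.trans (reach_map g hgG a u hu)
      · intro hx
        have hx' : Relation.ReflTransGen r a x := hx
        refine ⟨(g : Equiv.Perm Ω)⁻¹ x, ?_, ?_⟩
        · show Relation.ReflTransGen r a ((g : Equiv.Perm Ω)⁻¹ x)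
          have h1 := reach_map _ (inv_mem hgG) _ _ hreach_ga
          simp only [Equiv.Perm.inv_def, Equiv.symm_apply_apply] at h1
          have h2 := reach_map _ (inv_mem hgG) _ _ hx'
          exact (hsymmR h1).trans h2
        · show (g : Equiv.Perm Ω) ((g : Equiv.Perm Ω)⁻¹ x) = x
          simp
    have hCuniv : C = Set.univ := by
      rcases hG.2 C hCblock with h | h
      · exact absurd (h Relation.ReflTransGen.refl (Relation.ReflTransGen.single rab)) hab
      · exact h
    have reach_all : ∀ x, Relation.ReflTransGen r a x := by
      intro x
      have : x ∈ C := by rw [hCuniv]; trivial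
      exact this
    -- parity invariance along the connected graph
    have key : ∀ P Q : Ω → Prop, (∀ x y, r x y → (P x ↔ ¬ P y)) →
        (∀ x y, r x y → (Q x ↔ ¬ Q y)) →
        ∀ x, ((P a ↔ Q a) ↔ (P x ↔ Q x)) := by
      intro P Q hP hQ x
      induction reach_all x with
      | refl => rfl
      | tail _ hstep ih =>
        have hp := hP _ _ hstep
        have hq := hQ _ _ hstep
        rw [ih]; tauto
    -- dichotomy for each g ∈ G
    have dich : ∀ g : G, (∀ x, f x = a ↔ f ((g : Equiv.Perm Ω) x) = a) ∨
        (∀ x, ¬ (f x = a ↔ f ((g : Equiv.Perm Ω) x) = a)) := by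
      intro g
      have hQ : ∀ x y, r x y → (f ((g : Equiv.Perm Ω) x) = a ↔ ¬ f ((g : Equiv.Perm Ω) y) = a) :=
        fun x y hxy => rflip _ _ (rinv g g.2 x y hxy)
      have h := key (fun x => f x = a) (fun x => f ((g : Equiv.Perm Ω) x) = a) rflip hQ
      by_cases hc : f a = a ↔ f ((g : Equiv.Perm Ω) a) = a
      · exact Or.inl fun x => (h x).mp hc
      · exact Or.inr fun x hx => hc ((h x).mpr hx)
    set A' : Set Ω := {x | f x = a} with hA'
    set B' : Set Ω := {x | f x = b} with hB'
    have hbne : ∀ x, f x = b ↔ ¬ f x = a := by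
      intro x
      constructor
      · intro h h'; exact hab (h'.symm.trans h)
      · intro h; exact (hmem x).resolve_left h
    have hblockA : MulAction.IsBlock G A' := by
      rw [MulAction.isBlock_iff_smul_eq_or_disjoint]
      intro g
      rcases dich g with hc | hc
      · left
        ext x
        rw [Set.mem_smul_set_iff_inv_smul_mem]
        show f ((g : Equiv.Perm Ω)⁻¹ x) = a ↔ f x = a
        have := hc ((g : Equiv.Perm Ω)⁻¹ x)
        simp only [Equiv.Perm.inv_def, Equiv.apply_symm_apply] at this
        exact this
      · right
        rw [Set.disjoint_left]
        intro x hx hx'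
        rw [Set.mem_smul_set_iff_inv_smul_mem] at hx
        have hx2 : f ((g : Equiv.Perm Ω)⁻¹ x) = a := hx
        have hx3 : f x = a := hx'
        have := hc ((g : Equiv.Perm Ω)⁻¹ x)
        simp only [Equiv.Perm.inv_def, Equiv.apply_symm_apply] at this
        exact this ⟨fun _ => hx3, fun _ => hx2⟩
    have hblockB : MulAction.IsBlock G B' := by
      rw [MulAction.isBlock_iff_smul_eq_or_disjoint]
      intro g
      rcases dich g with hc | hc
      · left
        ext x
        rw [Set.mem_smul_set_iff_inv_smul_mem]
        show f ((g : Equiv.Perm Ω)⁻¹ x) = b ↔ f x = b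
        rw [hbne, hbne]
        have := hc ((g : Equiv.Perm Ω)⁻¹ x)
        simp only [Equiv.Perm.inv_def, Equiv.apply_symm_apply] at this
        exact not_congr this
      · right
        rw [Set.disjoint_left]
        intro x hx hx'
        rw [Set.mem_smul_set_iff_inv_smul_mem] at hx
        have hx2 : f ((g : Equiv.Perm Ω)⁻¹ x) = b := hx
        have hx3 : f x = b := hx'
        rw [hbne] at hx2 hx3
        have := hc ((g : Equiv.Perm Ω)⁻¹ x)
        simp only [Equiv.Perm.inv_def, Equiv.apply_symm_apply] at this
        exact this ⟨fun h => absurd h hx2, fun h => absurd h hx3⟩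
    obtain ⟨x₀, hx₀⟩ := ha
    obtain ⟨y₀, hy₀⟩ := hb
    have hAss : A'.Subsingleton := by
      rcases hG.2 A' hblockA with h | h
      · exact h
      · exfalso
        have hy : y₀ ∈ A' := h ▸ Set.mem_univ y₀
        have hy' : f y₀ = a := hy
        exact hab (hy'.symm.trans hy₀)
    have hBss : B'.Subsingleton := by
      rcases hG.2 B' hblockB with h | h
      · exact h
      · exfalso
        have hx : x₀ ∈ B' := h ▸ Set.mem_univ x₀
        have hx' : f x₀ = b := hx
        exact hab (hx₀.symm.trans hx')
    have hle : Fintype.card Ω ≤ 2 := by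
      have hsub : (Finset.univ : Finset Ω) ⊆ {x₀, y₀} := by
        intro x _
        rcases hmem x with h | h
        · have hx : x = x₀ := hAss h hx₀
          simp [hx]
        · have hx : x = y₀ := hBss h hy₀
          simp [hx]
      calc Fintype.card Ω = (Finset.univ : Finset Ω).card := rfl
        _ ≤ ({x₀, y₀} : Finset Ω).card := Finset.card_le_card hsub
        _ ≤ 2 := (Finset.card_insert_le x₀ {y₀}).trans (by simp)
    exact absurd hn (not_lt.mpr hle)
end

section
/- Let S be a transformation semigroup on a set Ω of size n containing a transitive permutation group G, and let f ∈ S have minimum rank r in S. Then the kernel partition of f is uniform (each part has size n/r) and the image of f is an r-clique in Gr(S). -/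
open Finset

variable {Ω : Type*} [Fintype Ω] [DecidableEq Ω]

theorem stmt19 (S : Set (Ω → Ω)) (hS : ∀ f ∈ S, ∀ g ∈ S, (g ∘ f) ∈ S)
    (G : Subgroup (Equiv.Perm Ω)) (hGS : ∀ g : Equiv.Perm Ω, g ∈ G → ⇑g ∈ S)
    (hGtrans : MulAction.IsPretransitive G Ω) (f : Ω → Ω) (hf : f ∈ S)
    (hmin : ∀ h ∈ S, rank f ≤ rank h) :
    (∀ x : Ω, (Finset.univ.filter (fun y => f y = f x)).card = Fintype.card Ω / rank f) ∧
      (Gr S).IsNClique (rank f) (Finset.univ.image f) := by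
  classical
  have hclique : (Gr S).IsNClique (rank f) (Finset.univ.image f) := by
    constructor
    · intro u hu v hv huv
      refine ⟨huv, fun h hh hc => ?_⟩
      have hcomp : (h ∘ f) ∈ S := hS f hf h hh
      have him : (Finset.univ.image (h ∘ f)) = (Finset.univ.image f).image h := by
        rw [Finset.image_image]
      have hle : ((Finset.univ.image f).image h).card ≤ (Finset.univ.image f).card :=
        Finset.card_image_le
      have hne : ((Finset.univ.image f).image h).card ≠ (Finset.univ.image f).card := by
        intro he
        exact huv (Finset.injOn_of_card_image_eq he hu hv hc)
      have hlt : rank (h ∘ f) < rank f := by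
        unfold rank; rw [him]; exact lt_of_le_of_ne hle hne
      exact absurd (hmin _ hcomp) (not_le.mpr hlt)
    · rfl
  refine ⟨?_, hclique⟩
  intro x
  haveI : Fintype ↥G := Fintype.ofFinite ↥G
  set n := Fintype.card Ω with hn
  set I : Finset Ω := Finset.univ.image f with hI
  have hrI : I.card = rank f := rfl
  have hrpos : 0 < rank f := by
    rw [← hrI]
    exact Finset.card_pos.mpr ⟨f x, Finset.mem_image_of_mem f (Finset.mem_univ x)⟩
  set K : Finset Ω := Finset.univ.filter (fun y => f y = f x) with hK
  -- each translate of the image is a transversal of the kernel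
  have htrans : ∀ g : ↥G,
      ((I.image (⇑(g : Equiv.Perm Ω))).filter (fun t => f t = f x)).card = 1 := by
    intro g
    set T := I.image (⇑(g : Equiv.Perm Ω)) with hT
    have hTcard : T.card = rank f := by
      rw [hT, Finset.card_image_of_injective _ (Equiv.injective _), hrI]
    have hmemS : (f ∘ ⇑(g : Equiv.Perm Ω)) ∘ f ∈ S :=
      hS f hf _ (hS _ (hGS _ g.2) f hf)
    have himg : Finset.univ.image ((f ∘ ⇑(g : Equiv.Perm Ω)) ∘ f) = T.image f := by
      rw [hT, hI, Finset.image_image, Finset.image_image]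
    have hge : rank f ≤ (T.image f).card := by
      have h := hmin _ hmemS
      have h2 : rank ((f ∘ ⇑(g : Equiv.Perm Ω)) ∘ f) = (T.image f).card := by
        rw [rank, himg]
      exact h2 ▸ h
    have hle : (T.image f).card ≤ rank f :=
      le_trans Finset.card_image_le (le_of_eq hTcard)
    have heq : (T.image f).card = T.card := by omega
    have hinj : Set.InjOn f ↑T := Finset.injOn_of_card_image_eq heq
    have hsub : T.image f ⊆ I := by
      intro y hy
      obtain ⟨t, _, rfl⟩ := Finset.mem_image.mp hy
      exact Finset.mem_image_of_mem f (Finset.mem_univ t)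
    have hIeq : T.image f = I := Finset.eq_of_subset_of_card_le hsub (by omega)
    have hfxT : f x ∈ T.image f := by
      rw [hIeq]; exact Finset.mem_image_of_mem f (Finset.mem_univ x)
    obtain ⟨t, ht, hft⟩ := Finset.mem_image.mp hfxT
    rw [Finset.card_eq_one]
    refine ⟨t, ?_⟩
    ext a
    simp only [Finset.mem_filter, Finset.mem_singleton]
    constructor
    · rintro ⟨haT, hfa⟩
      exact hinj haT ht (hfa.trans hft.symm)
    · rintro rfl; exact ⟨ht, hft⟩
  -- the stabilizer counts
  have hcoset : ∀ i k : Ω,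
      (Finset.univ.filter (fun g : ↥G => (g : Equiv.Perm Ω) i = k)).card
        = (Finset.univ.filter (fun g : ↥G => (g : Equiv.Perm Ω) i = i)).card := by
    intro i k
    obtain ⟨g0, hg0⟩ := hGtrans.exists_smul_eq (i : Ω) k
    have hg0' : (g0 : Equiv.Perm Ω) i = k := hg0
    refine Finset.card_bij' (fun g _ => g0⁻¹ * g) (fun g _ => g0 * g) ?_ ?_ ?_ ?_
    · intro a ha
      simp only [Finset.mem_filter, Finset.mem_univ, true_and] at ha ⊢
      have : ((g0⁻¹ * a : ↥G) : Equiv.Perm Ω) i = (g0 : Equiv.Perm Ω)⁻¹ ((a : Equiv.Perm Ω) i) := by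
        simp [Equiv.Perm.mul_apply]
      rw [this, ha, ← hg0', ← Equiv.Perm.mul_apply, inv_mul_cancel, Equiv.Perm.one_apply]
    · intro a ha
      simp only [Finset.mem_filter, Finset.mem_univ, true_and] at ha ⊢
      have : ((g0 * a : ↥G) : Equiv.Perm Ω) i = (g0 : Equiv.Perm Ω) ((a : Equiv.Perm Ω) i) := by
        simp [Equiv.Perm.mul_apply]
      rw [this, ha, hg0']
    · intro a _; group
    · intro a _; group
  set c : Ω → ℕ := fun i => (Finset.univ.filter (fun g : ↥G => (g : Equiv.Perm Ω) i = i)).card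
    with hc
  -- orbit-stabilizer
  have horb : ∀ i : Ω, Fintype.card ↥G = n * c i := by
    intro i
    have h1 : (Finset.univ : Finset ↥G).card
        = ∑ k ∈ (Finset.univ : Finset Ω),
            ((Finset.univ : Finset ↥G).filter (fun g : ↥G => (g : Equiv.Perm Ω) i = k)).card :=
      Finset.card_eq_sum_card_fiberwise (fun g _ => Finset.mem_univ _)
    rw [Finset.card_univ] at h1
    rw [h1, Finset.sum_congr rfl (fun k _ => hcoset i k), Finset.sum_const, Finset.card_univ,
      smul_eq_mul]
  -- double counting
  have hcount : Fintype.card ↥G = (rank f) * (K.card * c x) := by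
    have h2 : ∑ g : ↥G, ((I.image (⇑(g : Equiv.Perm Ω))).filter (fun t => f t = f x)).card
        = Fintype.card ↥G := by
      rw [Finset.sum_congr rfl (fun g _ => htrans g), Finset.sum_const, Finset.card_univ,
        smul_eq_mul, mul_one]
    have h3 : ∀ g : ↥G, ((I.image (⇑(g : Equiv.Perm Ω))).filter (fun t => f t = f x)).card
        = (I.filter (fun i => f ((g : Equiv.Perm Ω) i) = f x)).card := by
      intro g
      rw [Finset.filter_image, Finset.card_image_of_injective _ (Equiv.injective _)]
    have h4 : Fintype.card ↥G
        = ∑ i ∈ I, ((Finset.univ : Finset ↥G).filter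
            (fun g : ↥G => f ((g : Equiv.Perm Ω) i) = f x)).card := by
      rw [← h2, Finset.sum_congr rfl (fun g _ => h3 g)]
      simp only [Finset.card_filter]
      rw [Finset.sum_comm]
    have h5 : ∀ i : Ω, ((Finset.univ : Finset ↥G).filter
        (fun g : ↥G => f ((g : Equiv.Perm Ω) i) = f x)).card = K.card * c i := by
      intro i
      have hmaps : ∀ g ∈ (Finset.univ : Finset ↥G).filter
          (fun g : ↥G => f ((g : Equiv.Perm Ω) i) = f x), (g : Equiv.Perm Ω) i ∈ K := by
        intro g hg
        simp only [Finset.mem_filter, Finset.mem_univ, true_and] at hg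
        simp only [hK, Finset.mem_filter, Finset.mem_univ, true_and]
        exact hg
      have h6 := Finset.card_eq_sum_card_fiberwise hmaps
      rw [h6]
      have h7 : ∀ k ∈ K, (((Finset.univ : Finset ↥G).filter
          (fun g : ↥G => f ((g : Equiv.Perm Ω) i) = f x)).filter
            (fun g : ↥G => (g : Equiv.Perm Ω) i = k)).card = c i := by
        intro k hk
        simp only [hK, Finset.mem_filter, Finset.mem_univ, true_and] at hk
        rw [Finset.filter_filter]
        have heqf : (Finset.univ.filter
            (fun a : ↥G => f ((a : Equiv.Perm Ω) i) = f x ∧ (a : Equiv.Perm Ω) i = k))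
            = Finset.univ.filter (fun g : ↥G => (g : Equiv.Perm Ω) i = k) := by
          apply Finset.filter_congr
          intro g _
          constructor
          · rintro ⟨_, h⟩; exact h
          · rintro h; exact ⟨by rw [h, hk], h⟩
        rw [heqf, hcoset i k]
      rw [Finset.sum_congr rfl h7, Finset.sum_const, smul_eq_mul]
    rw [h4, Finset.sum_congr rfl (fun i _ => h5 i)]
    have h8 : ∀ i ∈ I, K.card * c i = K.card * c x := by
      intro i _
      have := (horb i).symm.trans (horb x)
      have hnpos : 0 < n := by rw [hn]; exact Fintype.card_pos_iff.mpr ⟨x⟩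
      have : c i = c x := by
        exact Nat.eq_of_mul_eq_mul_left hnpos this
      rw [this]
    rw [Finset.sum_congr rfl h8, Finset.sum_const, smul_eq_mul, hrI]
  -- conclude
  have hGpos : 0 < Fintype.card ↥G := Fintype.card_pos_iff.mpr ⟨1⟩
  have hcpos : 0 < c x := by
    apply Finset.card_pos.mpr
    exact ⟨1, by simp⟩
  have hkey : n = rank f * K.card := by
    have h9 : n * c x = rank f * K.card * c x := by
      rw [← horb x, hcount, mul_assoc]
    exact Nat.eq_of_mul_eq_mul_right hcpos h9
  show K.card = n / rank f
  rw [hkey, Nat.mul_div_cancel_left _ hrpos]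
end
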